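/- arXiv:1210.3802 — 9 statements merged into one kernel-verified Lean document; each statement's English description precedes it below -/
import Mathlib

section
/- The determinant of the (n−1)×(n−1) complex matrix whose (i,j) entry is S^{(a)}(v_i, v_j), for 1 ≤ i, j ≤ n−1, equals (a_1 a_2 ⋯ a_n)/|a|. -/
open Finset

/-- The contravariant form `S^{(a)}` on `V = ℂ^n` (coordinates in the standard basis
`F_1, …, F_n`), determined by `S^{(a)}(F_i, F_j) = δ_{ij} a_i`. -/
noncomputable def S1 {n : ℕ} (a : Fin n → ℂ) (x y : Fin n → ℂ) : ℂ :=
  ∑ j, a j * x j * y j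

/-- The vector `v_j = -F_j + (a_j/|a|) ∑_i F_i`, written in coordinates. -/
noncomputable def v1 {n : ℕ} (a : Fin n → ℂ) (j : Fin n) : Fin n → ℂ :=
  fun i => (if i = j then (-1 : ℂ) else 0) + a j / (∑ m, a m)

/-- The subspace `Sing V = {∑ c_j F_j : ∑ a_j c_j = 0}`. -/
noncomputable def singV1 {n : ℕ} (a : Fin n → ℂ) : Submodule ℂ (Fin n → ℂ) where
  carrier := {c | ∑ j, a j * c j = 0}
  add_mem' := by
    intro x y hx hy
    simp only [Set.mem_setOf_eq, Pi.add_apply, mul_add, Finset.sum_add_distrib] at *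
    simp [hx, hy]
  zero_mem' := by simp
  smul_mem' := by
    intro c x hx
    simp only [Set.mem_setOf_eq, Pi.smul_apply, smul_eq_mul] at *
    have h : ∑ j, a j * (c * x j) = c * ∑ j, a j * x j := by
      rw [Finset.mul_sum]
      exact Finset.sum_congr rfl fun j _ => by ring
    rw [h, hx, mul_zero]

lemma S1_v1_v1 {n : ℕ} (a : Fin n → ℂ) (hA : (∑ j, a j) ≠ 0) (p q : Fin n) :
    S1 a (v1 a p) (v1 a q) =
      (if p = q then a p else 0) - a p * a q / (∑ j, a j) := by
  set A := ∑ j, a j with hAdef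
  unfold S1 v1
  have hterm : ∀ k : Fin n,
      a k * ((if k = p then (-1 : ℂ) else 0) + a p / A)
        * ((if k = q then (-1 : ℂ) else 0) + a q / A)
      = ((if k = p then (if k = q then a k else 0) else 0)
        + (if k = p then -(a k * (a q / A)) else 0))
        + ((if k = q then -(a k * (a p / A)) else 0)
        + a k * (a p / A) * (a q / A)) := by
    intro k
    split_ifs <;> ring
  rw [Finset.sum_congr rfl fun k _ => hterm k]
  rw [Finset.sum_add_distrib, Finset.sum_add_distrib, Finset.sum_add_distrib]
  rw [Finset.sum_ite_eq' Finset.univ p, Finset.sum_ite_eq' Finset.univ p,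
    Finset.sum_ite_eq' Finset.univ q]
  simp only [Finset.mem_univ, if_true]
  have hlast : ∑ k, a k * (a p / A) * (a q / A) = a p * a q / A := by
    rw [← Finset.sum_mul, ← Finset.sum_mul, ← hAdef]
    field_simp
  rw [hlast]
  ring

/-- The determinant of the `(n-1)×(n-1)` matrix
`(S^{(a)}(v_i, v_j))_{1 ≤ i,j ≤ n-1}` equals `(a_1 ⋯ a_n)/|a|`. -/
theorem stmt_2 (n : ℕ) (hn : 2 ≤ n) (a : Fin n → ℂ) (ha : ∀ j, a j ≠ 0)
    (hA : (∑ j, a j) ≠ 0) :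
    Matrix.det (Matrix.of fun i j : Fin (n - 1) =>
        S1 a (v1 a (Fin.castLE (Nat.sub_le n 1) i)) (v1 a (Fin.castLE (Nat.sub_le n 1) j))) =
      (∏ j, a j) / (∑ j, a j) := by
  obtain ⟨m, rfl⟩ : ∃ m, n = m + 1 := ⟨n - 1, by omega⟩
  set A := ∑ j, a j with hAdef
  set a' : Fin m → ℂ := fun i => a (Fin.castLE (Nat.sub_le (m+1) 1) i) with ha'
  have hM : (Matrix.of fun i j : Fin (m + 1 - 1) =>
      S1 a (v1 a (Fin.castLE (Nat.sub_le (m+1) 1) i)) (v1 a (Fin.castLE (Nat.sub_le (m+1) 1) j)))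
      = Matrix.diagonal a' *
        (1 + Matrix.replicateCol Unit (fun _ : Fin m => (-1 : ℂ) / A) * Matrix.replicateRow Unit a') := by
    ext i j
    simp only [Matrix.of_apply]
    rw [S1_v1_v1 a hA]
    have hij : (Fin.castLE (Nat.sub_le (m+1) 1) i = Fin.castLE (Nat.sub_le (m+1) 1) j) ↔ i = j := by
      simp [Fin.ext_iff]
    simp only [Matrix.mul_apply, Matrix.add_apply, Matrix.one_apply, Matrix.replicateCol_apply,
      Matrix.replicateRow_apply, Matrix.diagonal_apply, ite_mul, zero_mul,
      Finset.sum_ite_eq, Finset.mem_univ, if_true, Finset.univ_unique, Finset.sum_singleton,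
      Fintype.sum_unique]
    by_cases h : i = j <;> simp only [h, hij, if_true, if_false, ← hAdef] <;>
      simp only [ha'] <;> field_simp <;> ring
  rw [hM, Matrix.det_mul, Matrix.det_diagonal, Matrix.det_one_add_replicateCol_mul_replicateRow]
  have hsum : A = (∑ i : Fin m, a' i) + a (Fin.last m) := by
    rw [hAdef, Fin.sum_univ_castSucc]
    rfl
  have hdot : dotProduct a' (fun _ : Fin m => (-1 : ℂ) / A)
      = (∑ i : Fin m, a' i) * ((-1) / A) := by
    simp [dotProduct, Finset.sum_mul]
  rw [hdot]
  have hprod : ∏ j, a j = (∏ i : Fin m, a' i) * a (Fin.last m) := by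
    rw [Fin.prod_univ_castSucc]
    rfl
  rw [hprod]
  have hS : (∑ i : Fin m, a' i) = A - a (Fin.last m) := by rw [hsum]; ring
  rw [hS]
  all_goals field_simp
  all_goals (ring_nf; rw [mul_comm]; congr 1)
end

section
/- For every z ∈ ℂ^n with pairwise distinct coordinates and all i, j ∈ {1,…,n}, one has K_j(z) v_i = K_i(z) v_j. -/
open Finset

/-- The operator `L_{i,j} : V → V` with `L_{i,j}F_i = a_j F_i − a_i F_j`,
`L_{i,j}F_j = a_i F_j − a_j F_i`, `L_{i,j}F_m = 0` for `m ∉ {i,j}` (in coordinates). -/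
noncomputable def L1 {n : ℕ} (a : Fin n → ℂ) (i j : Fin n) :
    (Fin n → ℂ) →ₗ[ℂ] (Fin n → ℂ) where
  toFun x := fun m =>
    if m = i then (x i - x j) * a j else if m = j then (x j - x i) * a i else 0
  map_add' x y := by
    funext m
    simp only [Pi.add_apply]
    split_ifs <;> ring
  map_smul' c x := by
    funext m
    simp only [Pi.smul_apply, smul_eq_mul, RingHom.id_apply]
    split_ifs <;> ring

/-- The operator `K_j(z) = ∑_{i ≠ j} L_{j,i}/(z_j − z_i)`. -/
noncomputable def K1 {n : ℕ} (a : Fin n → ℂ) (z : Fin n → ℂ) (j : Fin n) :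
    (Fin n → ℂ) →ₗ[ℂ] (Fin n → ℂ) :=
  ∑ i ∈ Finset.univ.erase j, (z j - z i)⁻¹ • L1 a j i

/-- For `z` with pairwise distinct coordinates, `K_j(z) v_i = K_i(z) v_j`
for all `i, j`. -/
theorem stmt_4 (n : ℕ) (hn : 2 ≤ n) (a : Fin n → ℂ) (ha : ∀ j, a j ≠ 0)
    (hA : (∑ j, a j) ≠ 0) (z : Fin n → ℂ) (hz : Function.Injective z) :
    ∀ i j : Fin n, K1 a z j (v1 a i) = K1 a z i (v1 a j) := by
  have key : ∀ (p q : Fin n), p ≠ q → ∀ m, K1 a z p (v1 a q) m =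
      (z p - z q)⁻¹ * (if m = p then a q else if m = q then -(a p) else 0) := by
    intro p q hpq m
    simp only [K1, LinearMap.sum_apply, LinearMap.smul_apply, L1, LinearMap.coe_mk,
      AddHom.coe_mk, Pi.smul_apply, smul_eq_mul, Finset.sum_apply]
    rw [Finset.sum_eq_single q]
    · simp only [v1, if_neg (Ne.symm hpq), if_pos rfl]
      split_ifs with h1 h2 <;> ring
    · intro k _ hk
      have h1 : v1 a q p - v1 a q k = 0 := by
        simp only [v1, if_neg hpq, if_neg hk]; ring
      have h1' : v1 a q k - v1 a q p = 0 := by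
        rw [← neg_sub, h1, neg_zero]
      simp only [h1, h1', zero_mul]
      split_ifs <;> simp
    · intro hq
      exact absurd (Finset.mem_erase.mpr ⟨Ne.symm hpq, Finset.mem_univ q⟩) hq
  intro i j
  by_cases hij : i = j
  · subst hij; rfl
  funext m
  rw [key j i (Ne.symm hij) m, key i j hij m]
  have h2 : (z j - z i)⁻¹ = -(z i - z j)⁻¹ := by
    rw [← neg_sub (z i) (z j), ← neg_inv]
  rw [h2]
  split_ifs with h3 h4 h5 h6
  · exact absurd (h4.symm.trans h3) hij
  all_goals ring
end

section
/- For every z ∈ ℂ^n, the period map q(z) = (1/|a|) Σ_{j=1}^n z_j v_j satisfies S^{(a)}(q(z), q(z)) = Σ_{1 ≤ i < j ≤ n} (a_i a_j / |a|³) (z_i − z_j)². (This is the potential function of first kind for the family of n points on the line.) -/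
open Finset

lemma sym_pair_sum {n : ℕ} (F : Fin n → Fin n → ℂ) (hsym : ∀ i j, F i j = F j i)
    (hdiag : ∀ i, F i i = 0) :
    2 * ∑ i, ∑ j ∈ Finset.univ.filter (fun j => i < j), F i j = ∑ i, ∑ j, F i j := by
  have hswap : (∑ i, ∑ j ∈ Finset.univ.filter (fun j => j < i), F i j)
      = ∑ i, ∑ j ∈ Finset.univ.filter (fun j => i < j), F i j := by
    simp only [Finset.sum_filter]
    rw [Finset.sum_comm]
    exact Finset.sum_congr rfl fun i _ => Finset.sum_congr rfl fun j _ => by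
      by_cases h : j < i <;> simp [h, hsym]
  have hsplit : ∀ i : Fin n, (∑ j, F i j)
      = (∑ j ∈ Finset.univ.filter (fun j => i < j), F i j)
        + ∑ j ∈ Finset.univ.filter (fun j => j < i), F i j := by
    intro i
    rw [← Finset.sum_filter_add_sum_filter_not Finset.univ (fun j => i < j) (F i)]
    congr 1
    have : Finset.univ.filter (fun j => ¬ i < j)
        = insert i (Finset.univ.filter (fun j : Fin n => j < i)) := by
      ext j
      simp only [Finset.mem_filter, Finset.mem_insert, Finset.mem_univ, true_and, not_lt]
      constructor
      · intro h
        rcases lt_or_eq_of_le h with h | h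
        · exact Or.inr h
        · exact Or.inl h
      · rintro (rfl | h)
        · exact le_refl _
        · exact le_of_lt h
    rw [this, Finset.sum_insert (by simp), hdiag, zero_add]
  calc 2 * ∑ i, ∑ j ∈ Finset.univ.filter (fun j => i < j), F i j
      = (∑ i, ∑ j ∈ Finset.univ.filter (fun j => i < j), F i j)
        + ∑ i, ∑ j ∈ Finset.univ.filter (fun j => j < i), F i j := by rw [hswap]; ring
    _ = ∑ i, ∑ j, F i j := by
        rw [← Finset.sum_add_distrib]
        exact (Finset.sum_congr rfl fun i _ => (hsplit i).symm)

/-- For every `z ∈ ℂ^n`, the period map `q(z) = (1/|a|) ∑_j z_j v_j`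
satisfies `S^{(a)}(q(z), q(z)) = ∑_{i<j} (a_i a_j/|a|³)(z_i − z_j)²`. -/
theorem stmt_6 (n : ℕ) (hn : 2 ≤ n) (a : Fin n → ℂ) (ha : ∀ j, a j ≠ 0)
    (hA : (∑ j, a j) ≠ 0) (z : Fin n → ℂ) :
    S1 a ((∑ m, a m)⁻¹ • ∑ j, z j • v1 a j) ((∑ m, a m)⁻¹ • ∑ j, z j • v1 a j) =
      ∑ i, ∑ j ∈ Finset.univ.filter (fun j => i < j),
        (a i * a j / (∑ m, a m) ^ 3) * (z i - z j) ^ 2 := by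
  set A := ∑ m, a m with hAdef
  set B := ∑ j, a j * z j with hBdef
  set B2 := ∑ j, a j * z j ^ 2 with hB2def
  -- coordinates of q
  have hq : ∀ i, ((A⁻¹ • ∑ j, z j • v1 a j) : Fin n → ℂ) i = A⁻¹ * (B / A - z i) := by
    intro i
    simp only [Pi.smul_apply, Finset.sum_apply, smul_eq_mul, v1]
    congr 1
    have : ∀ j, z j * ((if i = j then (-1:ℂ) else 0) + a j / A)
        = (if i = j then -z j else 0) + z j * a j / A := by
      intro j; by_cases h : i = j <;> simp [h] <;> ring
    rw [Finset.sum_congr rfl fun j _ => this j, Finset.sum_add_distrib,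
      Finset.sum_ite_eq Finset.univ i (fun j => -z j)]
    have h2 : ∑ j, z j * a j / A = B / A := by
      rw [hBdef, Finset.sum_div]
      exact Finset.sum_congr rfl fun j _ => by ring
    rw [h2]; simp; ring
  -- LHS value
  have hLHS : S1 a ((A⁻¹ • ∑ j, z j • v1 a j)) ((A⁻¹ • ∑ j, z j • v1 a j))
      = (A * B2 - B ^ 2) / A ^ 3 := by
    unfold S1
    have : ∀ i, a i * ((A⁻¹ • ∑ j, z j • v1 a j) i) * ((A⁻¹ • ∑ j, z j • v1 a j) i)
        = (a i * z i ^ 2) * (A⁻¹)^2 - (a i * z i) * (2 * B * (A⁻¹)^3)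
          + a i * (B ^ 2 * (A⁻¹)^4) := by
      intro i
      rw [hq i]
      field_simp
      ring
    rw [Finset.sum_congr rfl fun i _ => this i]
    rw [Finset.sum_add_distrib, Finset.sum_sub_distrib, ← Finset.sum_mul, ← Finset.sum_mul,
      ← Finset.sum_mul, ← hB2def, ← hBdef, ← hAdef]
    field_simp
    ring
  -- RHS value
  have hkey : 2 * ∑ i, ∑ j ∈ Finset.univ.filter (fun j => i < j),
      a i * a j * (z i - z j) ^ 2 = 2 * (A * B2 - B ^ 2) := by
    rw [sym_pair_sum (fun i j => a i * a j * (z i - z j) ^ 2)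
      (fun i j => by ring) (fun i => by ring)]
    have : ∀ i j : Fin n, a i * a j * (z i - z j) ^ 2
        = a i * (a j * z j ^ 2) + (a i * z i ^ 2) * a j - 2 * ((a i * z i) * (a j * z j)) := by
      intro i j; ring
    rw [Finset.sum_congr rfl fun i _ => Finset.sum_congr rfl fun j _ => this i j]
    simp only [Finset.sum_add_distrib, Finset.sum_sub_distrib, ← Finset.mul_sum,
      ← Finset.sum_mul, ← hBdef, ← hB2def]
    rw [← hAdef]
    ring
  have hkey' : ∑ i, ∑ j ∈ Finset.univ.filter (fun j => i < j),
      a i * a j * (z i - z j) ^ 2 = A * B2 - B ^ 2 := by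
    have h2 : (2:ℂ) ≠ 0 := two_ne_zero
    exact mul_left_cancel₀ h2 hkey
  have hRHS : (∑ i, ∑ j ∈ Finset.univ.filter (fun j => i < j),
      (a i * a j / A ^ 3) * (z i - z j) ^ 2) = (A * B2 - B ^ 2) / A ^ 3 := by
    rw [← hkey', Finset.sum_div]
    exact Finset.sum_congr rfl fun i _ => by
      rw [Finset.sum_div]; exact Finset.sum_congr rfl fun j _ => by ring
  rw [hLHS, hRHS]
end

section
/- Let a_1,…,a_n ∈ ℝ and let P̃(z) = (1/2) Σ_{1 ≤ i < j ≤ n} a_i a_j (z_i − z_j)² log(z_i − z_j) on the open set U = {z ∈ ℝ^n : z_1 > z_2 > ⋯ > z_n}. Then on U the third partial derivatives of P̃ are: ∂³P̃/∂z_i ∂z_j ∂z_ℓ = 0 for pairwise distinct i, j, ℓ; ∂³P̃/∂z_i² ∂z_j = −a_i a_j/(z_i − z_j) for i ≠ j; and ∂³P̃/∂z_i³ = Σ_{j ≠ i} a_i a_j/(z_i − z_j). (These third derivatives are the negatives of the structure constants of the multiplication ∂_i ∗_z ∂_j = (a_i/(z_i−z_j)) ∂_j + (a_j/(z_j−z_i))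 ∂_i paired with the metric η; this is the content of the theorem d(∂²P̃/∂z_i∂z_j) = −η̃(∂_i) ∗_z η̃(∂_j) for the potential function of second kind of the family of n points on a line.) -/
open Finset

/-- Partial derivative in the `i`-th coordinate direction of a function on `ℝ^n`. -/
noncomputable def pd {n : ℕ} (i : Fin n) (f : (Fin n → ℝ) → ℝ) : (Fin n → ℝ) → ℝ :=
  fun z => deriv (fun t : ℝ => f (Function.update z i t)) (z i)

/-- The potential function of second kind
`P̃(z) = (1/2) ∑_{i<j} a_i a_j (z_i − z_j)² log(z_i − z_j)` for points on the line. -/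
noncomputable def Ptil1 {n : ℕ} (a : Fin n → ℝ) : (Fin n → ℝ) → ℝ :=
  fun z => (1 / 2) * ∑ i, ∑ j ∈ Finset.univ.filter (fun j => i < j),
    a i * a j * (z i - z j) ^ 2 * Real.log (z i - z j)


lemma hd_log {b x : ℝ} (h : x ≠ b) :
    HasDerivAt (fun t : ℝ => Real.log (t - b)) (1 / (x - b)) x := by
  have h0 : x - b ≠ 0 := sub_ne_zero.mpr h
  have := (Real.hasDerivAt_log h0).comp x ((hasDerivAt_id x).sub_const b)
  rw [one_div]; exact this.congr_deriv (mul_one _)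

lemma hd_sq {b x : ℝ} (h : x ≠ b) :
    HasDerivAt (fun t : ℝ => (t - b) ^ 2 * Real.log (t - b))
      (2 * (x - b) * Real.log (x - b) + (x - b)) x := by
  have h0 : x - b ≠ 0 := sub_ne_zero.mpr h
  have h1 : HasDerivAt (fun t : ℝ => (t - b) ^ 2) (2 * (x - b)) x := by
    have := ((hasDerivAt_id x).sub_const b).fun_pow 2
    refine this.congr_deriv ?_
    norm_num
  have h2 := h1.mul (hd_log h)
  refine h2.congr_deriv ?_
  field_simp

lemma hd_log' {b x : ℝ} (h : x ≠ b) :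
    HasDerivAt (fun t : ℝ => Real.log (b - t)) (-(1 / (b - x))) x := by
  have h0 : b - x ≠ 0 := sub_ne_zero.mpr (Ne.symm h)
  have := (Real.hasDerivAt_log h0).comp x ((hasDerivAt_id x).const_sub b)
  refine this.congr_deriv ?_
  field_simp

lemma hd_sq' {b x : ℝ} (h : x ≠ b) :
    HasDerivAt (fun t : ℝ => (b - t) ^ 2 * Real.log (b - t))
      (-(2 * (b - x) * Real.log (b - x) + (b - x))) x := by
  have h0 : b - x ≠ 0 := sub_ne_zero.mpr (Ne.symm h)
  have h1 : HasDerivAt (fun t : ℝ => (b - t) ^ 2) (-(2 * (b - x))) x := by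
    have := ((hasDerivAt_id x).const_sub b).fun_pow 2
    refine this.congr_deriv ?_
    norm_num
  have h2 := h1.mul (hd_log' h)
  refine h2.congr_deriv ?_
  field_simp
  ring

lemma hd_lin {b x : ℝ} (h : x ≠ b) :
    HasDerivAt (fun t : ℝ => (t - b) * Real.log (t - b) + (t - b) / 2)
      (Real.log (x - b) + 3 / 2) x := by
  have h0 : x - b ≠ 0 := sub_ne_zero.mpr h
  have h1 : HasDerivAt (fun t : ℝ => (t - b)) 1 x := (hasDerivAt_id x).sub_const b
  have h2 := (h1.mul (hd_log h)).add (h1.div_const 2)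
  refine h2.congr_deriv ?_
  field_simp
  ring

lemma hd_lin' {b x : ℝ} (h : x ≠ b) :
    HasDerivAt (fun t : ℝ => (b - t) * Real.log (b - t) + (b - t) / 2)
      (-(Real.log (b - x) + 3 / 2)) x := by
  have h0 : b - x ≠ 0 := sub_ne_zero.mpr (Ne.symm h)
  have h1 : HasDerivAt (fun t : ℝ => (b - t)) (-1) x := (hasDerivAt_id x).const_sub b
  have h2 := (h1.mul (hd_log' h)).add (h1.div_const 2)
  refine h2.congr_deriv ?_
  field_simp
  ring

lemma hd_term1 {b x : ℝ} (c : ℝ) (h : x ≠ b) :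
    HasDerivAt (fun t : ℝ => c * (t - b) ^ 2 * Real.log (t - b))
      (c * (2 * (x - b) * Real.log (x - b) + (x - b))) x := by
  simpa [mul_assoc] using (hd_sq h).const_mul c

lemma hd_term2 {b x : ℝ} (c : ℝ) (h : x ≠ b) :
    HasDerivAt (fun t : ℝ => c * (b - t) ^ 2 * Real.log (b - t))
      (-(c * (2 * (b - x) * Real.log (b - x) + (b - x)))) x := by
  have := (hd_sq' h).const_mul c
  convert this using 1
  · rfl
  · rfl
  · ext t; ring
  · ring

lemma hd_term3 {b x : ℝ} (c : ℝ) (h : x ≠ b) :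
    HasDerivAt (fun t : ℝ => c * ((t - b) * Real.log (t - b) + (t - b) / 2))
      (c * (Real.log (x - b) + 3 / 2)) x :=
  (hd_lin h).const_mul c

lemma hd_term4 {b x : ℝ} (c : ℝ) (h : x ≠ b) :
    HasDerivAt (fun t : ℝ => c * ((b - t) * Real.log (b - t) + (b - t) / 2))
      (-(c * (Real.log (b - x) + 3 / 2))) x := by
  have := (hd_lin' h).const_mul c
  refine this.congr_deriv ?_
  ring

lemma hd_term5 {b x : ℝ} (c : ℝ) (h : x ≠ b) :
    HasDerivAt (fun t : ℝ => c * (Real.log (t - b) + 3 / 2))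
      (c / (x - b)) x := by
  have := ((hd_log h).add_const (3 / 2)).const_mul c
  refine this.congr_deriv ?_
  field_simp

lemma hd_term6 {b x : ℝ} (c : ℝ) (h : x ≠ b) :
    HasDerivAt (fun t : ℝ => c * (Real.log (b - t) + 3 / 2))
      (-(c / (b - x))) x := by
  have := ((hd_log' h).add_const (3 / 2)).const_mul c
  refine this.congr_deriv ?_
  field_simp

def Udist (n : ℕ) : Set (Fin n → ℝ) := {w | ∀ i j : Fin n, i ≠ j → w i ≠ w j}

lemma isOpen_Udist (n : ℕ) : IsOpen (Udist n) := by
  have : Udist n = ⋂ i : Fin n, ⋂ j : Fin n, {w : Fin n → ℝ | i ≠ j → w i ≠ w j} := by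
    ext w; simp [Udist, Set.mem_iInter]
  rw [this]
  refine isOpen_iInter_of_finite fun i => isOpen_iInter_of_finite fun j => ?_
  by_cases hij : i = j
  · simp [hij]
  · have : {w : Fin n → ℝ | i ≠ j → w i ≠ w j} = {w : Fin n → ℝ | w i ≠ w j} := by
      ext w; simp [hij]
    rw [this]
    exact isOpen_ne_fun (continuous_apply i) (continuous_apply j)

lemma pd_congr {n : ℕ} (i : Fin n) {f g : (Fin n → ℝ) → ℝ} {U : Set (Fin n → ℝ)}
    (hU : IsOpen U) (hfg : ∀ w ∈ U, f w = g w) {z : Fin n → ℝ} (hz : z ∈ U) :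
    pd i f z = pd i g z := by
  unfold pd
  apply Filter.EventuallyEq.deriv_eq
  have hc : Continuous (fun t : ℝ => Function.update z i t) :=
    continuous_const.update i continuous_id
  have hmem : Function.update z i (z i) = z := Function.update_eq_self i z
  have h1 : ∀ᶠ t in nhds (z i), Function.update z i t ∈ U := by
    have hzmem : z i ∈ (fun t : ℝ => Function.update z i t) ⁻¹' U := by
      simp only [Set.mem_preimage, hmem]; exact hz
    have := (hU.preimage hc).mem_nhds hzmem
    exact Filter.eventually_iff_exists_mem.mpr ⟨_, this, fun t ht => ht⟩
  filter_upwards [h1] with t ht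
  exact hfg _ ht

noncomputable def D1 {n : ℕ} (a : Fin n → ℝ) (k : Fin n) : (Fin n → ℝ) → ℝ :=
  fun w => ∑ j ∈ Finset.univ.erase k,
    a k * a j * ((w k - w j) * Real.log (w k - w j) + (w k - w j) / 2)

lemma erase_eq_union {n : ℕ} (k : Fin n) :
    (univ : Finset (Fin n)).erase k =
      univ.filter (fun m => m < k) ∪ univ.filter (fun m => k < m) := by
  ext m
  simp only [mem_erase, mem_union, mem_filter, mem_univ, true_and, and_true]
  constructor
  · intro h
    rcases lt_or_gt_of_ne h with h' | h'
    exacts [Or.inl h', Or.inr h']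
  · rintro (h | h)
    exacts [h.ne, h.ne']

lemma disj_filters {n : ℕ} (k : Fin n) :
    Disjoint ((univ : Finset (Fin n)).filter (fun m => m < k))
      (univ.filter (fun m => k < m)) := by
  rw [Finset.disjoint_left]
  intro m hm hm'
  simp only [mem_filter] at hm hm'
  exact absurd hm'.2 (not_lt.mpr hm.2.le)

lemma pdP {n : ℕ} (a : Fin n → ℝ) (k : Fin n) (w : Fin n → ℝ)
    (hw : w ∈ Udist n) : pd k (Ptil1 a) w = D1 a k w := by
  classical
  set F : Fin n → ℝ := fun j =>
    a k * a j * (2 * (w k - w j) * Real.log (w k - w j) + (w k - w j)) with hF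
  set G : Fin n → ℝ := fun i =>
    -(a i * a k * (2 * (w i - w k) * Real.log (w i - w k) + (w i - w k))) with hG
  have H : HasDerivAt (fun t : ℝ => Ptil1 a (Function.update w k t))
      ((1/2) * ∑ i, ∑ j ∈ univ.filter (fun j => i < j),
        ((if i = k then F j else 0) + (if j = k then G i else 0))) (w k) := by
    unfold Ptil1
    apply HasDerivAt.const_mul
    apply HasDerivAt.fun_sum
    intro i _
    apply HasDerivAt.fun_sum
    intro j hj
    have hij : i < j := (mem_filter.mp hj).2
    by_cases hik : i = k
    · subst hik
      have hjk : j ≠ i := hij.ne'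
      simp only [hF, if_neg hjk, add_zero, Function.update_self,
        Function.update_of_ne hjk, eq_self_iff_true, if_true]
      exact hd_term1 (a i * a j) (hw i j hij.ne)
    · by_cases hjk : j = k
      · subst hjk
        simp only [hG, if_neg hik, zero_add, Function.update_self,
          Function.update_of_ne hik, eq_self_iff_true, if_true]
        exact hd_term2 (a i * a j) (hw j i (Ne.symm hik))
      · simp only [if_neg hik, if_neg hjk, add_zero,
          Function.update_of_ne hik, Function.update_of_ne hjk]
        exact hasDerivAt_const _ _
  have hpd : pd k (Ptil1 a) w = (1/2) * ∑ i, ∑ j ∈ univ.filter (fun j => i < j),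
      ((if i = k then F j else 0) + (if j = k then G i else 0)) := by
    unfold pd
    exact H.deriv
  rw [hpd]
  have hsum : ∀ i : Fin n,
      (∑ j ∈ univ.filter (fun j => i < j),
        ((if i = k then F j else 0) + (if j = k then G i else 0)))
      = (if i = k then ∑ j ∈ univ.filter (fun j => k < j), F j else 0)
        + (if i < k then G i else 0) := by
    intro i
    rw [Finset.sum_add_distrib]
    congr 1
    · by_cases hik : i = k
      · subst hik; simp
      · simp [hik]
    · rw [Finset.sum_ite_eq' (univ.filter (fun j => i < j)) k (fun _ => G i)]
      simp
  simp only [hsum]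
  rw [Finset.sum_add_distrib, Finset.sum_ite_eq' univ k
    (fun _ => ∑ j ∈ univ.filter (fun j => k < j), F j)]
  rw [← Finset.sum_filter (fun m => m < k) G]
  simp only [mem_univ, if_pos]
  unfold D1
  rw [erase_eq_union k, Finset.sum_union (disj_filters k), mul_add,
    Finset.mul_sum, Finset.mul_sum, add_comm]
  congr 1
  · apply Finset.sum_congr rfl
    intro m hm
    have hlog : Real.log (w k - w m) = Real.log (w m - w k) := by
      rw [show w k - w m = -(w m - w k) by ring, Real.log_neg_eq_log]
    rw [hG, hlog]
    ring
  · apply Finset.sum_congr rfl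
    intro m hm
    rw [hF]
    ring

noncomputable def D2d {n : ℕ} (a : Fin n → ℝ) (k : Fin n) : (Fin n → ℝ) → ℝ :=
  fun w => ∑ j ∈ Finset.univ.erase k, a k * a j * (Real.log (w k - w j) + 3 / 2)

noncomputable def D2o {n : ℕ} (a : Fin n → ℝ) (k l : Fin n) : (Fin n → ℝ) → ℝ :=
  fun w => -(a k * a l * (Real.log (w k - w l) + 3 / 2))

lemma pdD1_diag {n : ℕ} (a : Fin n → ℝ) (k : Fin n) (w : Fin n → ℝ)
    (hw : w ∈ Udist n) : pd k (D1 a k) w = D2d a k w := by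
  have H : HasDerivAt (fun t : ℝ => D1 a k (Function.update w k t))
      (∑ j ∈ univ.erase k, a k * a j * (Real.log (w k - w j) + 3 / 2)) (w k) := by
    unfold D1
    apply HasDerivAt.fun_sum
    intro j hj
    have hjk : j ≠ k := (mem_erase.mp hj).1
    simp only [Function.update_self, Function.update_of_ne hjk]
    exact hd_term3 (a k * a j) (hw k j (Ne.symm hjk))
  unfold pd
  exact H.deriv

lemma pdD1_off {n : ℕ} (a : Fin n → ℝ) (k l : Fin n) (hlk : l ≠ k) (w : Fin n → ℝ)
    (hw : w ∈ Udist n) : pd l (D1 a k) w = D2o a k l w := by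
  have H : HasDerivAt (fun t : ℝ => D1 a k (Function.update w l t))
      (∑ j ∈ univ.erase k,
        (if j = l then -(a k * a l * (Real.log (w k - w l) + 3 / 2)) else 0)) (w l) := by
    unfold D1
    apply HasDerivAt.fun_sum
    intro j hj
    have hjk : j ≠ k := (mem_erase.mp hj).1
    have hkl : k ≠ l := Ne.symm hlk
    by_cases hjl : j = l
    · subst hjl
      simp only [Function.update_self, Function.update_of_ne hjk.symm,
        eq_self_iff_true, if_true]
      exact hd_term4 (a k * a j) (hw j k hjk)
    · simp only [Function.update_of_ne hjl, Function.update_of_ne hkl, if_neg hjl]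
      exact hasDerivAt_const _ _
  have hpd : pd l (D1 a k) w = ∑ j ∈ univ.erase k,
      (if j = l then -(a k * a l * (Real.log (w k - w l) + 3 / 2)) else 0) := by
    unfold pd
    exact H.deriv
  rw [hpd, Finset.sum_ite_eq' (univ.erase k) l
    (fun _ => -(a k * a l * (Real.log (w k - w l) + 3 / 2)))]
  rw [if_pos (mem_erase.mpr ⟨hlk, mem_univ l⟩)]
  rfl

lemma pdD2o {n : ℕ} (a : Fin n → ℝ) (i j l : Fin n) (hil : i ≠ l) (hjl : j ≠ l)
    (z : Fin n → ℝ) : pd l (D2o a i j) z = 0 := by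
  unfold pd D2o
  simp only [Function.update_of_ne hil, Function.update_of_ne hjl]
  exact deriv_const _ _

lemma pdD2d_off {n : ℕ} (a : Fin n → ℝ) (i j : Fin n) (hji : j ≠ i) (z : Fin n → ℝ)
    (hw : z ∈ Udist n) :
    pd j (D2d a i) z = -(a i * a j) / (z i - z j) := by
  have H : HasDerivAt (fun t : ℝ => D2d a i (Function.update z j t))
      (∑ m ∈ univ.erase i,
        (if m = j then -(a i * a j / (z i - z j)) else 0)) (z j) := by
    unfold D2d
    apply HasDerivAt.fun_sum
    intro m hm
    have hmi : m ≠ i := (mem_erase.mp hm).1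
    by_cases hmj : m = j
    · subst hmj
      simp only [Function.update_self, Function.update_of_ne hmi.symm,
        eq_self_iff_true, if_true]
      exact hd_term6 (a i * a m) (hw m i hmi)
    · simp only [Function.update_of_ne hmj, Function.update_of_ne (Ne.symm hji), if_neg hmj]
      exact hasDerivAt_const _ _
  have hpd : pd j (D2d a i) z = ∑ m ∈ univ.erase i,
      (if m = j then -(a i * a j / (z i - z j)) else 0) := by
    unfold pd
    exact H.deriv
  rw [hpd, Finset.sum_ite_eq' (univ.erase i) j
    (fun _ => -(a i * a j / (z i - z j)))]
  rw [if_pos (mem_erase.mpr ⟨hji, mem_univ j⟩), neg_div]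

lemma pdD2d_diag {n : ℕ} (a : Fin n → ℝ) (i : Fin n) (z : Fin n → ℝ)
    (hw : z ∈ Udist n) :
    pd i (D2d a i) z = ∑ m ∈ univ.erase i, a i * a m / (z i - z m) := by
  have H : HasDerivAt (fun t : ℝ => D2d a i (Function.update z i t))
      (∑ m ∈ univ.erase i, a i * a m / (z i - z m)) (z i) := by
    unfold D2d
    apply HasDerivAt.fun_sum
    intro m hm
    have hmi : m ≠ i := (mem_erase.mp hm).1
    simp only [Function.update_self, Function.update_of_ne hmi]
    exact hd_term5 (a i * a m) (hw i m (Ne.symm hmi))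
  unfold pd
  exact H.deriv

/-- On the region `z_1 > z_2 > ⋯ > z_n` the third partial derivatives of
`P̃` are: `∂³P̃/∂z_i∂z_j∂z_ℓ = 0` for pairwise distinct `i, j, ℓ`;
`∂³P̃/∂z_i²∂z_j = −a_i a_j/(z_i − z_j)` for `i ≠ j`; and
`∂³P̃/∂z_i³ = ∑_{j≠i} a_i a_j/(z_i − z_j)`. -/
theorem stmt_7 (n : ℕ) (a : Fin n → ℝ) (z : Fin n → ℝ)
    (hz : ∀ i j : Fin n, i < j → z j < z i) :
    (∀ i j l : Fin n, i ≠ j → j ≠ l → i ≠ l →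
      pd l (pd j (pd i (Ptil1 a))) z = 0) ∧
    (∀ i j : Fin n, i ≠ j →
      pd j (pd i (pd i (Ptil1 a))) z = -(a i * a j) / (z i - z j)) ∧
    (∀ i : Fin n,
      pd i (pd i (pd i (Ptil1 a))) z =
        ∑ j ∈ Finset.univ.erase i, a i * a j / (z i - z j)) := by
  have hzU : z ∈ Udist n := by
    intro i j hij
    rcases lt_or_gt_of_ne hij with h | h
    · exact (hz i j h).ne'
    · exact (hz j i h).ne
  have hO := isOpen_Udist n
  refine ⟨?_, ?_, ?_⟩
  · intro i j l hij hjl hil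
    have h2 : ∀ w ∈ Udist n, pd j (pd i (Ptil1 a)) w = D2o a i j w := fun w hw =>
      (pd_congr j hO (fun v hv => pdP a i v hv) hw).trans (pdD1_off a i j hij.symm w hw)
    have h3 : pd l (pd j (pd i (Ptil1 a))) z = pd l (D2o a i j) z :=
      pd_congr l hO h2 hzU
    rw [h3, pdD2o a i j l hil hjl z]
  · intro i j hij
    have h2 : ∀ w ∈ Udist n, pd i (pd i (Ptil1 a)) w = D2d a i w := fun w hw =>
      (pd_congr i hO (fun v hv => pdP a i v hv) hw).trans (pdD1_diag a i w hw)
    have h3 : pd j (pd i (pd i (Ptil1 a))) z = pd j (D2d a i) z :=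
      pd_congr j hO h2 hzU
    rw [h3, pdD2d_off a i j hij.symm z hzU]
  · intro i
    have h2 : ∀ w ∈ Udist n, pd i (pd i (Ptil1 a)) w = D2d a i w := fun w hw =>
      (pd_congr i hO (fun v hv => pdP a i v hv) hw).trans (pdD1_diag a i w hw)
    have h3 : pd i (pd i (pd i (Ptil1 a))) z = pd i (D2d a i) z :=
      pd_congr i hO h2 hzU
    rw [h3, pdD2d_diag a i z hzU]
end

section
/- For any four pairwise distinct indices i, j, k, ℓ and any z ∈ ℂ^n one has: f_{i,j,k}(z)/(d_{k,i} d_{i,j}) + f_{i,k,ℓ}(z)/(d_{ℓ,i} d_{i,k}) + f_{i,ℓ,j}(z)/(d_{j,i} d_{i,ℓ}) = 0, and f_{i,j,k}(z)²/(d_{i,j} d_{j,k} d_{k,i}) − f_{j,k,ℓ}(z)²/(d_{j,k} d_{k,ℓ} d_{ℓ,j}) + f_{k,ℓ,i}(z)²/(d_{k,ℓ} d_{ℓ,i} d_{i,k}) − f_{ℓ,i,j}(z)²/(d_{ℓ,i} d_{i,j} d_{j,ℓ}) = 0. -/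
open Finset

/-- `d_{i,j} = b_i^1 b_j^2 − b_i^2 b_j^1`. -/
def dd2 {n : ℕ} (b : Fin n → Fin 2 → ℂ) (i j : Fin n) : ℂ :=
  b i 0 * b j 1 - b i 1 * b j 0

/-- `f_{i,j,k}(z) = d_{j,k} z_i + d_{k,i} z_j + d_{i,j} z_k`. -/
def ff2 {n : ℕ} (b : Fin n → Fin 2 → ℂ) (z : Fin n → ℂ) (i j k : Fin n) : ℂ :=
  dd2 b j k * z i + dd2 b k i * z j + dd2 b i j * z k

set_option maxHeartbeats 4000000 in
/-- The two Plücker-type identities among the `f_{i,j,k}` for four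
pairwise distinct indices. -/
theorem stmt_8 (n : ℕ) (hn : 4 ≤ n) (b : Fin n → Fin 2 → ℂ)
    (hd : ∀ i j : Fin n, i ≠ j → dd2 b i j ≠ 0)
    (z : Fin n → ℂ) (i j k l : Fin n)
    (hij : i ≠ j) (hik : i ≠ k) (hil : i ≠ l) (hjk : j ≠ k) (hjl : j ≠ l) (hkl : k ≠ l) :
    ff2 b z i j k / (dd2 b k i * dd2 b i j) + ff2 b z i k l / (dd2 b l i * dd2 b i k) +
        ff2 b z i l j / (dd2 b j i * dd2 b i l) = 0 ∧
    ff2 b z i j k ^ 2 / (dd2 b i j * dd2 b j k * dd2 b k i) -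
        ff2 b z j k l ^ 2 / (dd2 b j k * dd2 b k l * dd2 b l j) +
        ff2 b z k l i ^ 2 / (dd2 b k l * dd2 b l i * dd2 b i k) -
        ff2 b z l i j ^ 2 / (dd2 b l i * dd2 b i j * dd2 b j l) = 0 := by
  have h1 := hd i j hij
  have h2 := hd i k hik
  have h3 := hd i l hil
  have h4 := hd j k hjk
  have h5 := hd j l hjl
  have h6 := hd k l hkl
  have h7 := hd j i hij.symm
  have h8 := hd k i hik.symm
  have h9 := hd l i hil.symm
  have h10 := hd k j hjk.symm
  have h11 := hd l j hjl.symm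
  have h12 := hd l k hkl.symm
  refine ⟨?_, ?_⟩
  · rw [div_add_div _ _ (mul_ne_zero h8 h1) (mul_ne_zero h9 h2),
      div_add_div _ _ (mul_ne_zero (mul_ne_zero h8 h1) (mul_ne_zero h9 h2)) (mul_ne_zero h7 h3),
      div_eq_zero_iff]
    left
    simp only [ff2, dd2]
    ring
  · rw [div_sub_div _ _ (mul_ne_zero (mul_ne_zero h1 h4) h8) (mul_ne_zero (mul_ne_zero h4 h6) h11),
      div_add_div _ _ (mul_ne_zero (mul_ne_zero (mul_ne_zero h1 h4) h8) (mul_ne_zero (mul_ne_zero h4 h6) h11)) (mul_ne_zero (mul_ne_zero h6 h9) h2),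
      div_sub_div _ _ (mul_ne_zero (mul_ne_zero (mul_ne_zero (mul_ne_zero h1 h4) h8) (mul_ne_zero (mul_ne_zero h4 h6) h11)) (mul_ne_zero (mul_ne_zero h6 h9) h2)) (mul_ne_zero (mul_ne_zero h9 h1) h5),
      div_eq_zero_iff]
    left
    simp only [ff2, dd2]
    ring
end

section
/- The following hold: (i) Sing V has dimension binom(n−1, 2) over ℂ; (ii) for all i ≠ j, v_{i,j} ∈ Sing V and F_{i,j} − v_{i,j} is orthogonal to Sing V with respect to S^{(a)} (so v_{i,j} is the orthogonal projection of F_{i,j}); (iii) Σ_{i=1}^n v_{i,j} = 0 for every j; (iv) for every m ∈ {1,…,n}, the vectors v_{i,j} with 1 ≤ i < j ≤ n and m ∉ {i,j} form a basis of Sing V. -/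
open Finset

/-- The basis vector `F_{i,j}` of `V` in the coordinate model: an element of
`Fin n → Fin n → ℂ` whose `(i,j)` entry is `1` and `(j,i)` entry is `-1`.
This realizes the relations `F_{j,i} = -F_{i,j}` and `F_{i,i} = 0`. -/
def F2 (n : ℕ) (i j : Fin n) : Fin n → Fin n → ℂ :=
  fun k l => (if k = i ∧ l = j then 1 else 0) - (if k = j ∧ l = i then 1 else 0)

/-- The space `V` spanned by the `F_{i,j}`: antisymmetric coefficient arrays. -/
noncomputable def skewV2 (n : ℕ) : Submodule ℂ (Fin n → Fin n → ℂ) where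
  carrier := {x | ∀ i j, x j i = -x i j}
  add_mem' := by
    intro x y hx hy i j
    simp only [Pi.add_apply, hx i j, hy i j]
    ring
  zero_mem' := by
    intro i j
    simp
  smul_mem' := by
    intro c x hx i j
    simp only [Pi.smul_apply, smul_eq_mul, hx i j]
    ring

/-- The subspace `Sing V ⊆ V` of singular vectors:
`{∑_{i<j} c_{i,j} F_{i,j} : ∑_{j<i} a_j c_{j,i} − ∑_{j>i} a_j c_{i,j} = 0 for every i}`. -/
noncomputable def singV2 (n : ℕ) (a : Fin n → ℂ) : Submodule ℂ (Fin n → Fin n → ℂ) where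
  carrier := {x | (∀ i j, x j i = -x i j) ∧ ∀ i,
    (∑ j ∈ Finset.univ.filter (fun j => j < i), a j * x j i) -
      (∑ j ∈ Finset.univ.filter (fun j => i < j), a j * x i j) = 0}
  add_mem' := by
    intro x y hx hy
    refine ⟨fun i j => ?_, fun i => ?_⟩
    · simp only [Pi.add_apply, hx.1 i j, hy.1 i j]; ring
    · have h1 := hx.2 i
      have h2 := hy.2 i
      simp only [Pi.add_apply, mul_add, Finset.sum_add_distrib]
      linear_combination h1 + h2
  zero_mem' := by
    constructor
    · intro i j; simp
    · intro i; simp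
  smul_mem' := by
    intro c x hx
    refine ⟨fun i j => ?_, fun i => ?_⟩
    · simp only [Pi.smul_apply, smul_eq_mul, hx.1 i j]; ring
    · have h := hx.2 i
      simp only [Pi.smul_apply, smul_eq_mul]
      have e1 : ∑ j ∈ Finset.univ.filter (fun j => j < i), a j * (c * x j i) =
          c * ∑ j ∈ Finset.univ.filter (fun j => j < i), a j * x j i := by
        rw [Finset.mul_sum]; exact Finset.sum_congr rfl fun j _ => by ring
      have e2 : ∑ j ∈ Finset.univ.filter (fun j => i < j), a j * (c * x i j) =
          c * ∑ j ∈ Finset.univ.filter (fun j => i < j), a j * x i j := by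
        rw [Finset.mul_sum]; exact Finset.sum_congr rfl fun j _ => by ring
      rw [e1, e2]
      linear_combination c * h

/-- The vector `v_{i,j} = F_{i,j} − (a_j/|a|) ∑_k F_{i,k} − (a_i/|a|) ∑_ℓ F_{ℓ,j}`
(for `i ≠ j`), and `v_{i,i} = 0`. -/
noncomputable def vv2 {n : ℕ} (a : Fin n → ℂ) (i j : Fin n) : Fin n → Fin n → ℂ :=
  if i = j then 0 else
    F2 n i j - (a j / ∑ m, a m) • (∑ k, F2 n i k) - (a i / ∑ m, a m) • (∑ l, F2 n l j)

/-- The contravariant form `S^{(a)}` with `S^{(a)}(F_{i,j}, F_{i,j}) = a_i a_j` for `i < j`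
and distinct basis vectors orthogonal, written on coordinates. -/
noncomputable def S2 {n : ℕ} (a : Fin n → ℂ) (x y : Fin n → Fin n → ℂ) : ℂ :=
  ∑ i, ∑ j ∈ Finset.univ.filter (fun j => i < j), a i * a j * x i j * y i j

/-- The operator `L_{i,j,k}` sending each of `F_{i,j}, F_{j,k}, F_{k,i}` to
`a_k F_{i,j} + a_i F_{j,k} + a_j F_{k,i}` and killing `F_{ℓ,m}` with `{ℓ,m} ⊄ {i,j,k}`. -/
noncomputable def L2 {n : ℕ} (a : Fin n → ℂ) (i j k : Fin n) :
    (Fin n → Fin n → ℂ) →ₗ[ℂ] (Fin n → Fin n → ℂ) where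
  toFun x := (x i j + x j k + x k i) •
    (a k • F2 n i j + a i • F2 n j k + a j • F2 n k i)
  map_add' x y := by
    simp only [Pi.add_apply]
    rw [← add_smul]
    congr 1
    ring
  map_smul' c x := by
    simp only [Pi.smul_apply, smul_eq_mul, RingHom.id_apply]
    rw [smul_smul]
    congr 1
    ring

/-- The operator `K_i(z) = ∑_{{j,k} ⊆ {1,…,n}∖{i}} (d_{j,k}/f_{i,j,k}(z)) L_{i,j,k}`,
the sum over unordered pairs `{j,k}` realized by `j < k`. -/
noncomputable def K2 {n : ℕ} (a : Fin n → ℂ) (b : Fin n → Fin 2 → ℂ) (z : Fin n → ℂ)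
    (i : Fin n) : (Fin n → Fin n → ℂ) →ₗ[ℂ] (Fin n → Fin n → ℂ) :=
  ∑ j ∈ Finset.univ.erase i, ∑ k ∈ Finset.univ.filter (fun k => j < k ∧ k ≠ i),
    (dd2 b j k / ff2 b z i j k) • L2 a i j k

section Lemmas
variable {n : ℕ} (a : Fin n → ℂ)

lemma sumF2_right (i k l : Fin n) : (∑ k' : Fin n, F2 n i k') k l
    = (if k = i then 1 else 0) - (if l = i then 1 else 0) := by
  simp only [Finset.sum_apply, F2, ite_and, Finset.sum_sub_distrib,
    Finset.sum_ite_eq, Finset.sum_ite_eq', Finset.mem_univ, if_true]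
  split_ifs <;> simp

lemma sumF2_left (j k l : Fin n) : (∑ l' : Fin n, F2 n l' j) k l
    = (if l = j then 1 else 0) - (if k = j then 1 else 0) := by
  simp only [Finset.sum_apply, F2, ite_and, Finset.sum_sub_distrib,
    Finset.sum_ite_eq, Finset.sum_ite_eq', Finset.mem_univ, if_true]
  split_ifs <;> simp

lemma vv2_apply {i j : Fin n} (hij : i ≠ j) (k l : Fin n) :
    vv2 a i j k l =
      ((if k = i ∧ l = j then 1 else 0) - (if k = j ∧ l = i then 1 else 0))
      - (a j / ∑ m, a m) * ((if k = i then 1 else 0) - (if l = i then 1 else 0))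
      - (a i / ∑ m, a m) * ((if l = j then 1 else 0) - (if k = j then 1 else 0)) := by
  simp only [vv2, if_neg hij, Pi.sub_apply, Pi.smul_apply, smul_eq_mul,
    sumF2_right, sumF2_left, F2]

end Lemmas
section Lemmas2
variable {n : ℕ} (a : Fin n → ℂ)

lemma filter_not_lt (i : Fin n) : Finset.univ.filter (fun j => ¬ j < i)
    = insert i (Finset.univ.filter (fun j => i < j)) := by
  ext j
  simp only [Finset.mem_filter, Finset.mem_univ, true_and, Finset.mem_insert]
  constructor
  · intro h
    rcases lt_or_eq_of_le (le_of_not_gt h) with h' | h'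
    · exact Or.inr h'
    · exact Or.inl h'.symm
  · rintro (rfl | h)
    · exact lt_irrefl _
    · exact not_lt_of_gt h

lemma singV2_constraint_eq {x : Fin n → Fin n → ℂ} (hx : ∀ i j, x j i = -x i j) (i : Fin n) :
    (∑ j ∈ Finset.univ.filter (fun j => j < i), a j * x j i) -
      (∑ j ∈ Finset.univ.filter (fun j => i < j), a j * x i j)
    = -∑ j, a j * x i j := by
  have hii : x i i = 0 := by linear_combination (1/2 : ℂ) * hx i i
  have hsplit := Finset.sum_filter_add_sum_filter_not Finset.univ (fun j => j < i)
    (fun j => a j * x i j)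
  have h2 : ∑ j ∈ Finset.univ.filter (fun j => ¬ j < i), a j * x i j
      = ∑ j ∈ Finset.univ.filter (fun j => i < j), a j * x i j := by
    rw [filter_not_lt, Finset.sum_insert (by simp), hii]
    ring
  have h3 : ∑ j ∈ Finset.univ.filter (fun j => j < i), a j * x j i
      = -∑ j ∈ Finset.univ.filter (fun j => j < i), a j * x i j := by
    rw [← Finset.sum_neg_distrib]
    exact Finset.sum_congr rfl fun j _ => by rw [hx i j]; ring
  rw [h3]
  linear_combination -hsplit + h2

lemma mem_singV2_iff (x : Fin n → Fin n → ℂ) :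
    x ∈ singV2 n a ↔ (∀ i j, x j i = -x i j) ∧ ∀ i, ∑ j, a j * x i j = 0 := by
  constructor
  · rintro ⟨h1, h2⟩
    refine ⟨h1, fun i => ?_⟩
    have := h2 i
    rw [singV2_constraint_eq a h1 i] at this
    linear_combination -this
  · rintro ⟨h1, h2⟩
    refine ⟨h1, fun i => ?_⟩
    rw [singV2_constraint_eq a h1 i, h2 i, neg_zero]

end Lemmas2
section Lemmas3
variable {n : ℕ} (a : Fin n → ℂ)

lemma vv2_apply' {i j : Fin n} (hij : i ≠ j) (k l : Fin n) :
    vv2 a i j k l =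
      ((if k = i then 1 else 0) * (if l = j then 1 else 0)
        - (if k = j then 1 else 0) * (if l = i then 1 else 0))
      - (a j / ∑ m, a m) * ((if k = i then 1 else 0) - (if l = i then 1 else 0))
      - (a i / ∑ m, a m) * ((if l = j then 1 else 0) - (if k = j then 1 else 0)) := by
  rw [vv2_apply a hij]
  by_cases h1 : k = i <;> by_cases h2 : l = j <;> by_cases h3 : k = j <;> by_cases h4 : l = i
    <;> simp [h1, h2, h3, h4, hij, hij.symm]

lemma vv2_antisym {i j : Fin n} (k l : Fin n) : vv2 a i j l k = - vv2 a i j k l := by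
  rcases eq_or_ne i j with rfl | hij
  · simp [vv2]
  rw [vv2_apply' a hij, vv2_apply' a hij]
  split_ifs <;> ring

lemma vv2_rowsum {i j : Fin n} (hij : i ≠ j) (hA : (∑ m, a m) ≠ 0) (k : Fin n) :
    ∑ l, a l * vv2 a i j k l = 0 := by
  have step : ∀ l, a l * vv2 a i j k l =
      (if l = j then a l * (if k = i then 1 else 0) else 0)
      - (if l = i then a l * (if k = j then 1 else 0) else 0)
      - ((a j / ∑ m, a m) * (if k = i then 1 else 0)) * a l
      + (a j / ∑ m, a m) * (if l = i then a l else 0)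
      - (a i / ∑ m, a m) * (if l = j then a l else 0)
      + ((a i / ∑ m, a m) * (if k = j then 1 else 0)) * a l := by
    intro l
    rw [vv2_apply' a hij]
    split_ifs <;> ring
  rw [Finset.sum_congr rfl fun l _ => step l]
  simp only [Finset.sum_add_distrib, Finset.sum_sub_distrib, Finset.sum_ite_eq',
    Finset.mem_univ, if_true, ← Finset.mul_sum]
  split_ifs with h1 h2 h2 <;> [skip; skip; skip; skip] <;> field_simp <;> ring

end Lemmas3
section Lemmas4
variable {n : ℕ} (a : Fin n → ℂ)

lemma vv2_colsum (hA : (∑ m, a m) ≠ 0) (j : Fin n) : (∑ i, vv2 a i j) = 0 := by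
  funext k l
  have h0 : (∑ i, vv2 a i j) k l = ∑ i, vv2 a i j k l := by
    rw [Finset.sum_apply]; simp [Finset.sum_apply]
  have hsplit : ∑ i, vv2 a i j k l = ∑ i ∈ Finset.univ.erase j, vv2 a i j k l := by
    rw [← Finset.sum_erase_add _ _ (Finset.mem_univ j)]
    simp [vv2]
  have step : ∀ i ∈ Finset.univ.erase j, vv2 a i j k l =
      (if k = i then ((if l = j then 1 else 0) - a j / ∑ m, a m) else 0)
      + (if l = i then (a j / ∑ m, a m - (if k = j then 1 else 0)) else 0)
      + a i * (((if k = j then 1 else 0) - (if l = j then 1 else 0)) / ∑ m, a m) := by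
    intro i hi
    rw [vv2_apply' a (Finset.ne_of_mem_erase hi)]
    split_ifs <;> ring
  have e1 : (∑ i, vv2 a i j) k l =
      (if k ∈ Finset.univ.erase j then ((if l = j then 1 else 0) - a j / ∑ m, a m) else 0)
      + (if l ∈ Finset.univ.erase j then (a j / ∑ m, a m - (if k = j then 1 else 0)) else 0)
      + (∑ i ∈ Finset.univ.erase j, a i) *
          (((if k = j then 1 else 0) - (if l = j then 1 else 0)) / ∑ m, a m) := by
    rw [h0, hsplit, Finset.sum_congr rfl step]
    simp only [Finset.sum_add_distrib, Finset.sum_ite_eq, ← Finset.sum_mul]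
  have e2 : ∑ i ∈ Finset.univ.erase j, a i = (∑ m, a m) - a j := by
    have := Finset.sum_erase_add Finset.univ a (Finset.mem_univ j)
    linear_combination this
  rw [e1, e2]
  simp only [Finset.mem_erase, Finset.mem_univ, and_true, Pi.zero_apply]
  by_cases h1 : k = j <;> by_cases h2 : l = j <;> simp [h1, h2] <;> field_simp <;> ring

end Lemmas4
section Lemmas5
variable {n : ℕ} (a : Fin n → ℂ)

lemma S2_orth {i j : Fin n} (hij : i ≠ j) (w : Fin n → Fin n → ℂ)
    (hw : w ∈ singV2 n a) : S2 a (F2 n i j - vv2 a i j) w = 0 := by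
  obtain ⟨hw1, hw2⟩ := hw
  have hG : ∀ p q : Fin n, (F2 n i j - vv2 a i j) p q
      = (a j / ∑ m, a m) * ((if p = i then 1 else 0) - (if q = i then 1 else 0))
      + (a i / ∑ m, a m) * ((if q = j then 1 else 0) - (if p = j then 1 else 0)) := by
    intro p q
    simp only [Pi.sub_apply, vv2_apply' a hij, F2]
    by_cases h1 : p = i <;> by_cases h2 : q = j <;> by_cases h3 : p = j <;> by_cases h4 : q = i
      <;> simp [h1, h2, h3, h4, hij, hij.symm] <;> ring
  have step : S2 a (F2 n i j - vv2 a i j) w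
      = (∑ p, ∑ q ∈ Finset.univ.filter (fun q => p < q),
          (if p = i then (a j / ∑ m, a m) * (a p * a q * w p q) else 0))
      - (∑ p, ∑ q ∈ Finset.univ.filter (fun q => p < q),
          (if q = i then (a j / ∑ m, a m) * (a p * a q * w p q) else 0))
      + (∑ p, ∑ q ∈ Finset.univ.filter (fun q => p < q),
          (if q = j then (a i / ∑ m, a m) * (a p * a q * w p q) else 0))
      - (∑ p, ∑ q ∈ Finset.univ.filter (fun q => p < q),
          (if p = j then (a i / ∑ m, a m) * (a p * a q * w p q) else 0)) := by
    unfold S2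
    rw [← Finset.sum_sub_distrib, ← Finset.sum_add_distrib, ← Finset.sum_sub_distrib]
    refine Finset.sum_congr rfl fun p _ => ?_
    rw [← Finset.sum_sub_distrib, ← Finset.sum_add_distrib, ← Finset.sum_sub_distrib]
    refine Finset.sum_congr rfl fun q _ => ?_
    rw [hG]; split_ifs <;> ring
  have P1 : (∑ p, ∑ q ∈ Finset.univ.filter (fun q => p < q),
      (if p = i then (a j / ∑ m, a m) * (a p * a q * w p q) else 0))
      = (a i * a j / ∑ m, a m) * ∑ q ∈ Finset.univ.filter (fun q => i < q), a q * w i q := by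
    rw [Finset.sum_eq_single i]
    · rw [Finset.mul_sum]
      refine Finset.sum_congr rfl fun q _ => ?_
      rw [if_pos rfl]; ring
    · intro p _ hp
      exact Finset.sum_eq_zero fun q _ => if_neg hp
    · simp
  have P4 : (∑ p, ∑ q ∈ Finset.univ.filter (fun q => p < q),
      (if p = j then (a i / ∑ m, a m) * (a p * a q * w p q) else 0))
      = (a i * a j / ∑ m, a m) * ∑ q ∈ Finset.univ.filter (fun q => j < q), a q * w j q := by
    rw [Finset.sum_eq_single j]
    · rw [Finset.mul_sum]
      refine Finset.sum_congr rfl fun q _ => ?_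
      rw [if_pos rfl]; ring
    · intro p _ hp
      exact Finset.sum_eq_zero fun q _ => if_neg hp
    · simp
  have P2 : (∑ p, ∑ q ∈ Finset.univ.filter (fun q => p < q),
      (if q = i then (a j / ∑ m, a m) * (a p * a q * w p q) else 0))
      = (a i * a j / ∑ m, a m) * ∑ p ∈ Finset.univ.filter (fun p => p < i), a p * w p i := by
    have inner : ∀ p : Fin n, (∑ q ∈ Finset.univ.filter (fun q => p < q),
        (if q = i then (a j / ∑ m, a m) * (a p * a q * w p q) else 0))
        = if p < i then (a j / ∑ m, a m) * (a p * a i * w p i) else 0 := by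
      intro p
      rw [Finset.sum_ite_eq']
      simp [Finset.mem_filter]
    rw [Finset.sum_congr rfl fun p _ => inner p, ← Finset.sum_filter, Finset.mul_sum]
    refine Finset.sum_congr rfl fun p _ => by ring
  have P3 : (∑ p, ∑ q ∈ Finset.univ.filter (fun q => p < q),
      (if q = j then (a i / ∑ m, a m) * (a p * a q * w p q) else 0))
      = (a i * a j / ∑ m, a m) * ∑ p ∈ Finset.univ.filter (fun p => p < j), a p * w p j := by
    have inner : ∀ p : Fin n, (∑ q ∈ Finset.univ.filter (fun q => p < q),
        (if q = j then (a i / ∑ m, a m) * (a p * a q * w p q) else 0))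
        = if p < j then (a i / ∑ m, a m) * (a p * a j * w p j) else 0 := by
      intro p
      rw [Finset.sum_ite_eq']
      simp [Finset.mem_filter]
    rw [Finset.sum_congr rfl fun p _ => inner p, ← Finset.sum_filter, Finset.mul_sum]
    refine Finset.sum_congr rfl fun p _ => by ring
  rw [step, P1, P2, P3, P4]
  linear_combination (a i * a j / ∑ m, a m) * (hw2 j - hw2 i)

end Lemmas5
section Lemmas6

lemma card_lt_pairs (N : ℕ) :
    Fintype.card {q : Fin N × Fin N // q.1 < q.2} = N.choose 2 := by
  rw [Fintype.card_subtype]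
  have hswap : (Finset.univ.filter fun p : Fin N × Fin N => p.2 < p.1).card
      = (Finset.univ.filter fun p : Fin N × Fin N => p.1 < p.2).card := by
    apply Finset.card_bij' (fun p _ => Prod.swap p) (fun p _ => Prod.swap p)
      <;> simp [Finset.mem_filter]
  have hunion : (Finset.univ.filter fun p : Fin N × Fin N => p.1 < p.2)
      ∪ (Finset.univ.filter fun p : Fin N × Fin N => p.2 < p.1)
      = (Finset.univ : Finset (Fin N)).offDiag := by
    ext p
    simp only [Finset.mem_union, Finset.mem_filter, Finset.mem_univ, true_and,
      Finset.mem_offDiag]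
    omega
  have hdisj : Disjoint (Finset.univ.filter fun p : Fin N × Fin N => p.1 < p.2)
      (Finset.univ.filter fun p : Fin N × Fin N => p.2 < p.1) := by
    rw [Finset.disjoint_left]
    intro p h1 h2
    simp only [Finset.mem_filter] at h1 h2
    omega
  have hcard := Finset.card_union_of_disjoint hdisj
  rw [hunion, Finset.offDiag_card, hswap] at hcard
  simp only [Finset.card_univ, Fintype.card_fin] at hcard
  rw [Nat.choose_two_right]
  have hNN : N * N - N = N * (N - 1) := by cases N <;> simp [Nat.mul_sub_one, Nat.succ_mul] <;> ring_nf <;> omega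
  rw [hNN] at hcard
  omega

lemma card_index (n : ℕ) (m : Fin n) :
    Fintype.card {p : Fin n × Fin n // p.1 < p.2 ∧ p.1 ≠ m ∧ p.2 ≠ m}
      = (n - 1).choose 2 := by
  cases n with
  | zero => exact m.elim0
  | succ N =>
    rw [Nat.succ_sub_one, ← card_lt_pairs N]
    refine (Fintype.card_congr (Equiv.ofBijective
      (fun q : {q : Fin N × Fin N // q.1 < q.2} =>
        (⟨(m.succAbove q.1.1, m.succAbove q.1.2),
          Fin.succAbove_lt_succAbove_iff.mpr q.2,
          Fin.succAbove_ne m q.1.1, Fin.succAbove_ne m q.1.2⟩ :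
          {p : Fin (N+1) × Fin (N+1) // p.1 < p.2 ∧ p.1 ≠ m ∧ p.2 ≠ m}))
      ⟨?_, ?_⟩)).symm
    · rintro ⟨⟨x1, x2⟩, hx⟩ ⟨⟨y1, y2⟩, hy⟩ h
      simp only [Subtype.mk_eq_mk, Prod.mk.injEq] at h
      exact Subtype.ext (Prod.ext (Fin.succAbove_right_injective h.1)
        (Fin.succAbove_right_injective h.2))
    · rintro ⟨⟨x, y⟩, hxy, hx, hy⟩
      obtain ⟨x', rfl⟩ := Fin.exists_succAbove_eq hx
      obtain ⟨y', rfl⟩ := Fin.exists_succAbove_eq hy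
      exact ⟨⟨(x', y'), Fin.succAbove_lt_succAbove_iff.mp hxy⟩, rfl⟩

end Lemmas6
section Lemmas7
variable {n : ℕ} (a : Fin n → ℂ)

lemma vv2_combo {m i j i' j' : Fin n} (hij : i < j) (him : i ≠ m) (hjm : j ≠ m)
    (hij' : i' < j') (him' : i' ≠ m) (hjm' : j' ≠ m) :
    vv2 a i' j' i j - vv2 a i' j' i m + vv2 a i' j' j m
      = if i' = i ∧ j' = j then 1 else 0 := by
  have h1 : i' ≠ j' := ne_of_lt hij'
  rw [vv2_apply' a h1, vv2_apply' a h1, vv2_apply' a h1]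
  have e1 : (if m = i' then (1:ℂ) else 0) = 0 := if_neg (by omega)
  have e2 : (if m = j' then (1:ℂ) else 0) = 0 := if_neg (by omega)
  rw [e1, e2]
  split_ifs <;> first | ring1 | (exfalso; omega)

end Lemmas7
section Lemmas8
variable {n : ℕ} (a : Fin n → ℂ)

lemma vv2_mem_singV2 {i j : Fin n} (hij : i ≠ j) (hA : (∑ m, a m) ≠ 0) :
    vv2 a i j ∈ singV2 n a :=
  (mem_singV2_iff a _).mpr ⟨fun k l => vv2_antisym a k l, vv2_rowsum a hij hA⟩

lemma vv2_indep (m : Fin n) :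
    LinearIndependent ℂ
      (fun p : {p : Fin n × Fin n // p.1 < p.2 ∧ p.1 ≠ m ∧ p.2 ≠ m} =>
        vv2 a p.1.1 p.1.2) := by
  rw [Fintype.linearIndependent_iff]
  intro g hg
  rintro ⟨⟨i, j⟩, hij, him, hjm⟩
  have E : ∀ k l : Fin n,
      (∑ p : {p : Fin n × Fin n // p.1 < p.2 ∧ p.1 ≠ m ∧ p.2 ≠ m},
        g p * vv2 a p.1.1 p.1.2 k l) = 0 := by
    intro k l
    have h1 := congrFun (congrFun hg k) l
    simpa [Finset.sum_apply] using h1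
  have key : (∑ p : {p : Fin n × Fin n // p.1 < p.2 ∧ p.1 ≠ m ∧ p.2 ≠ m},
      g p * (vv2 a p.1.1 p.1.2 i j - vv2 a p.1.1 p.1.2 i m + vv2 a p.1.1 p.1.2 j m))
      = g ⟨(i, j), hij, him, hjm⟩ := by
    rw [Finset.sum_congr rfl (fun p _ => by
      rw [vv2_combo a hij him hjm p.2.1 p.2.2.1 p.2.2.2])]
    rw [Finset.sum_eq_single (⟨(i, j), hij, him, hjm⟩ :
      {p : Fin n × Fin n // p.1 < p.2 ∧ p.1 ≠ m ∧ p.2 ≠ m})]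
    · simp
    · rintro ⟨⟨x, y⟩, hq⟩ _ hne
      have hxy : ¬(x = i ∧ y = j) := by
        rintro ⟨rfl, rfl⟩; exact hne rfl
      simp [hxy]
    · simp
  have split : (∑ p : {p : Fin n × Fin n // p.1 < p.2 ∧ p.1 ≠ m ∧ p.2 ≠ m},
      g p * (vv2 a p.1.1 p.1.2 i j - vv2 a p.1.1 p.1.2 i m + vv2 a p.1.1 p.1.2 j m))
      = (∑ p : {p : Fin n × Fin n // p.1 < p.2 ∧ p.1 ≠ m ∧ p.2 ≠ m},
          g p * vv2 a p.1.1 p.1.2 i j)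
        - (∑ p : {p : Fin n × Fin n // p.1 < p.2 ∧ p.1 ≠ m ∧ p.2 ≠ m},
          g p * vv2 a p.1.1 p.1.2 i m)
        + (∑ p : {p : Fin n × Fin n // p.1 < p.2 ∧ p.1 ≠ m ∧ p.2 ≠ m},
          g p * vv2 a p.1.1 p.1.2 j m) := by
    rw [← Finset.sum_sub_distrib, ← Finset.sum_add_distrib]
    exact Finset.sum_congr rfl fun p _ => by ring
  rw [← key, split, E i j, E i m, E j m]
  ring

lemma singV2_ext (m : Fin n) (ham : a m ≠ 0) (w : Fin n → Fin n → ℂ)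
    (hw : w ∈ singV2 n a)
    (hzero : ∀ k l : Fin n, k < l → k ≠ m → l ≠ m → w k l = 0) : w = 0 := by
  obtain ⟨hw1, hw2⟩ := (mem_singV2_iff a w).mp hw
  have hdiag : ∀ k, w k k = 0 := by
    intro k; have := hw1 k k; linear_combination (1/2 : ℂ) * this
  have hint : ∀ k l : Fin n, k ≠ m → l ≠ m → w k l = 0 := by
    intro k l hk hl
    rcases lt_trichotomy k l with h | rfl | h
    · exact hzero k l h hk hl
    · exact hdiag k
    · rw [hw1 l k, hzero l k h hl hk, neg_zero]
  have hcol : ∀ k : Fin n, k ≠ m → w k m = 0 := by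
    intro k hk
    have hsum := hw2 k
    have hsingle : (∑ l, a l * w k l) = a m * w k m :=
      Finset.sum_eq_single m (fun l _ hl => by rw [hint k l hk hl, mul_zero])
        (fun h => absurd (Finset.mem_univ m) h)
    rw [hsingle] at hsum
    exact (mul_eq_zero.mp hsum).resolve_left ham
  funext k l
  simp only [Pi.zero_apply]
  by_cases hk : k = m
  · by_cases hl : l = m
    · rw [hk, hl]; exact hdiag m
    · rw [hk, hw1 l m, hcol l hl, neg_zero]
  · by_cases hl : l = m
    · rw [hl]; exact hcol k hk
    · exact hint k l hk hl

end Lemmas8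

section Lemmas9
variable {n : ℕ} (a : Fin n → ℂ)

noncomputable def restrictMap (m : Fin n) :
    singV2 n a →ₗ[ℂ] ({p : Fin n × Fin n // p.1 < p.2 ∧ p.1 ≠ m ∧ p.2 ≠ m} → ℂ) where
  toFun w := fun p => (w : Fin n → Fin n → ℂ) p.1.1 p.1.2
  map_add' w u := rfl
  map_smul' c w := rfl

lemma restrictMap_injective (m : Fin n) (ham : a m ≠ 0) :
    Function.Injective (restrictMap a m) := by
  rw [← LinearMap.ker_eq_bot, LinearMap.ker_eq_bot']
  rintro ⟨w, hw⟩ hz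
  have hz' : ∀ k l : Fin n, k < l → k ≠ m → l ≠ m → w k l = 0 := by
    intro k l h1 h2 h3
    exact congrFun hz ⟨(k, l), h1, h2, h3⟩
  exact Subtype.ext (singV2_ext a m ham w hw hz')

lemma finrank_singV2 (hn : 1 ≤ n) (ha : ∀ j, a j ≠ 0) (hA : (∑ m, a m) ≠ 0) :
    Module.finrank ℂ (singV2 n a) = (n - 1).choose 2 := by
  have m : Fin n := ⟨0, by omega⟩
  have hle : Module.finrank ℂ (singV2 n a) ≤ (n - 1).choose 2 := by
    have h1 := LinearMap.finrank_le_finrank_of_injective (restrictMap_injective a m (ha m))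
    rwa [Module.finrank_fintype_fun_eq_card, card_index] at h1
  have hge : (n - 1).choose 2 ≤ Module.finrank ℂ (singV2 n a) := by
    have hindep : LinearIndependent ℂ
        (fun p : {p : Fin n × Fin n // p.1 < p.2 ∧ p.1 ≠ m ∧ p.2 ≠ m} =>
          (⟨vv2 a p.1.1 p.1.2, vv2_mem_singV2 a (ne_of_lt p.2.1) hA⟩ : singV2 n a)) := by
      apply LinearIndependent.of_comp (singV2 n a).subtype
      exact vv2_indep a m
    have h2 := hindep.fintype_card_le_finrank
    rwa [card_index] at h2
  omega

lemma vv2_span (m : Fin n) (ha : ∀ j, a j ≠ 0) (hn : 1 ≤ n) (hA : (∑ m, a m) ≠ 0) :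
    Submodule.span ℂ
        (Set.range (fun p : {p : Fin n × Fin n // p.1 < p.2 ∧ p.1 ≠ m ∧ p.2 ≠ m} =>
          vv2 a p.1.1 p.1.2)) = singV2 n a := by
  set bfam : {p : Fin n × Fin n // p.1 < p.2 ∧ p.1 ≠ m ∧ p.2 ≠ m} → singV2 n a :=
    fun p => ⟨vv2 a p.1.1 p.1.2, vv2_mem_singV2 a (ne_of_lt p.2.1) hA⟩ with hbfam
  have hindep : LinearIndependent ℂ bfam := by
    apply LinearIndependent.of_comp (singV2 n a).subtype
    exact vv2_indep a m
  have htop : Submodule.span ℂ (Set.range bfam) = ⊤ :=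
    hindep.span_eq_top_of_card_eq_finrank'
      (by rw [card_index, finrank_singV2 a hn ha hA])
  have hrange : Set.range (fun p : {p : Fin n × Fin n // p.1 < p.2 ∧ p.1 ≠ m ∧ p.2 ≠ m} =>
      vv2 a p.1.1 p.1.2) = (singV2 n a).subtype '' (Set.range bfam) := by
    rw [← Set.range_comp]; rfl
  rw [hrange, ← Submodule.map_span, htop, Submodule.map_subtype_top]

end Lemmas9


/-- (i) `dim Sing V = C(n−1,2)`; (ii) `v_{i,j} ∈ Sing V` and
`F_{i,j} − v_{i,j} ⟂ Sing V`; (iii) `∑_i v_{i,j} = 0`; (iv) for every `m` the vectors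
`v_{i,j}`, `i < j`, `m ∉ {i,j}`, form a basis of `Sing V`. -/
theorem stmt_9 (n : ℕ) (hn : 3 ≤ n) (b : Fin n → Fin 2 → ℂ)
    (hd : ∀ i j : Fin n, i ≠ j → dd2 b i j ≠ 0)
    (a : Fin n → ℂ) (ha : ∀ j, a j ≠ 0) (hA : (∑ j, a j) ≠ 0) :
    Module.finrank ℂ (singV2 n a) = (n - 1).choose 2 ∧
    (∀ i j : Fin n, i ≠ j → vv2 a i j ∈ singV2 n a ∧
      ∀ w ∈ singV2 n a, S2 a (F2 n i j - vv2 a i j) w = 0) ∧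
    (∀ j : Fin n, (∑ i, vv2 a i j) = 0) ∧
    (∀ m : Fin n,
      LinearIndependent ℂ
        (fun p : {p : Fin n × Fin n // p.1 < p.2 ∧ p.1 ≠ m ∧ p.2 ≠ m} =>
          vv2 a p.1.1 p.1.2) ∧
      Submodule.span ℂ
          (Set.range (fun p : {p : Fin n × Fin n // p.1 < p.2 ∧ p.1 ≠ m ∧ p.2 ≠ m} =>
            vv2 a p.1.1 p.1.2)) = singV2 n a) := by
  refine ⟨finrank_singV2 a (by omega) ha hA, ?_, ?_, ?_⟩
  · intro i j hij
    exact ⟨vv2_mem_singV2 a hij hA, fun w hw => S2_orth a hij w hw⟩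
  · intro j
    exact vv2_colsum a hA j
  · intro m
    exact ⟨vv2_indep a m, vv2_span a m ha (by omega) hA⟩
end

section
/- The contravariant form takes the following values on the vectors v_{i,j}: S^{(a)}(v_{i,j}, v_{k,ℓ}) = 0 when i, j, k, ℓ are pairwise distinct; S^{(a)}(v_{i,j}, v_{i,k}) = −a_i a_j a_k/|a| when i, j, k are pairwise distinct; and S^{(a)}(v_{i,j}, v_{i,j}) = a_i a_j − a_i a_j (a_i + a_j)/|a| = −Σ_{k ≠ j} S^{(a)}(v_{i,j}, v_{i,k}) for i ≠ j. -/
open Finset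

section aux10

open Finset

variable {n : ℕ}

lemma half_sum10 (g : Fin n → Fin n → ℂ) (hsym : ∀ p q, g q p = g p q)
    (hdiag : ∀ p, g p p = 0) :
    ∑ p, ∑ q ∈ univ.filter (fun q => p < q), g p q = (∑ p, ∑ q, g p q) / 2 := by
  have h1 : ∀ p : Fin n, ∑ q, g p q =
      (∑ q ∈ univ.filter (fun q => p < q), g p q) +
        ∑ q ∈ univ.filter (fun q => q < p), g p q := by
    intro p
    rw [← Finset.sum_filter_add_sum_filter_not univ (fun q => p < q)]
    congr 1
    rw [Finset.sum_filter, Finset.sum_filter]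
    refine Finset.sum_congr rfl fun q _ => ?_
    rcases lt_trichotomy p q with h | h | h
    · simp [h, asymm h]
    · subst h; simp [hdiag, lt_irrefl]
    · simp [h, not_lt_of_gt h, asymm h]
  have h2 : ∑ p, ∑ q ∈ univ.filter (fun q => q < p), g p q
      = ∑ p, ∑ q ∈ univ.filter (fun q => p < q), g p q := by
    simp only [Finset.sum_filter]
    rw [Finset.sum_comm]
    exact Finset.sum_congr rfl fun p _ => Finset.sum_congr rfl fun q _ => by
      by_cases h : p < q <;> simp [h, hsym]
  have h3 : ∑ p, ∑ q, g p q = 2 * ∑ p, ∑ q ∈ univ.filter (fun q => p < q), g p q := by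
    calc ∑ p, ∑ q, g p q
        = ∑ p, ((∑ q ∈ univ.filter (fun q => p < q), g p q) +
            ∑ q ∈ univ.filter (fun q => q < p), g p q) :=
          Finset.sum_congr rfl fun p _ => h1 p
      _ = _ := by rw [Finset.sum_add_distrib, h2]; ring
  rw [h3]; ring

lemma S2_full10 (a : Fin n → ℂ) (x y : Fin n → Fin n → ℂ)
    (hx : ∀ p q, x q p = -x p q) (hy : ∀ p q, y q p = -y p q) :
    S2 a x y = (∑ p, ∑ q, a p * a q * x p q * y p q) / 2 := by
  unfold S2
  exact half_sum10 _ (fun p q => by rw [hx p q, hy p q]; ring)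
    (fun p => by
      have h := hx p p
      have h0 : x p p = 0 := by linear_combination h / 2
      rw [h0]; ring)

lemma F2_anti10 (i j p q : Fin n) : F2 n i j q p = -(F2 n i j p q) := by
  by_cases h1 : p = i <;> by_cases h2 : q = j <;> by_cases h3 : p = j <;>
    by_cases h4 : q = i <;> simp [F2, h1, h2, h3, h4, and_comm]

lemma u_anti10 (i p q : Fin n) : (∑ k, F2 n i k) q p = -((∑ k, F2 n i k) p q) := by
  simp only [Finset.sum_apply]
  rw [← Finset.sum_neg_distrib]
  exact Finset.sum_congr rfl fun k _ => F2_anti10 i k p q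

lemma u_apply10 (i p q : Fin n) :
    (∑ k, F2 n i k) p q = (if p = i then 1 else 0) - (if q = i then 1 else 0) := by
  simp only [Finset.sum_apply, F2, Finset.sum_sub_distrib]
  congr 1
  · by_cases h : p = i <;> simp [h]
  · by_cases h : q = i <;> simp [h, eq_comm]

lemma w_eq_neg_u10 (j : Fin n) : (∑ l, F2 n l j) = -(∑ k, F2 n j k) := by
  funext p q
  simp only [Finset.sum_apply, Pi.neg_apply, ← Finset.sum_neg_distrib]
  refine Finset.sum_congr rfl fun l _ => ?_
  simp only [F2]; ring

lemma S2_add_left10 (a : Fin n → ℂ) (x y z : Fin n → Fin n → ℂ) :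
    S2 a (x + y) z = S2 a x z + S2 a y z := by
  unfold S2
  rw [← Finset.sum_add_distrib]
  refine Finset.sum_congr rfl fun p _ => ?_
  rw [← Finset.sum_add_distrib]
  refine Finset.sum_congr rfl fun q _ => ?_
  simp only [Pi.add_apply]; ring

lemma S2_sub_left10 (a : Fin n → ℂ) (x y z : Fin n → Fin n → ℂ) :
    S2 a (x - y) z = S2 a x z - S2 a y z := by
  unfold S2
  rw [← Finset.sum_sub_distrib]
  refine Finset.sum_congr rfl fun p _ => ?_
  rw [← Finset.sum_sub_distrib]
  refine Finset.sum_congr rfl fun q _ => ?_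
  simp only [Pi.sub_apply]; ring

lemma S2_smul_left10 (a : Fin n → ℂ) (c : ℂ) (x z : Fin n → Fin n → ℂ) :
    S2 a (c • x) z = c * S2 a x z := by
  unfold S2
  rw [Finset.mul_sum]
  refine Finset.sum_congr rfl fun p _ => ?_
  rw [Finset.mul_sum]
  refine Finset.sum_congr rfl fun q _ => ?_
  simp only [Pi.smul_apply, smul_eq_mul]; ring

lemma S2_comm10 (a : Fin n → ℂ) (x y : Fin n → Fin n → ℂ) : S2 a x y = S2 a y x := by
  unfold S2
  refine Finset.sum_congr rfl fun p _ => Finset.sum_congr rfl fun q _ => by ring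

lemma S2_zero_right10 (a : Fin n → ℂ) (x : Fin n → Fin n → ℂ) : S2 a x 0 = 0 := by
  simp [S2]

/-- `II x y` is `1` if `x = y` and `0` otherwise. -/
def II {m : ℕ} (x y : Fin m) : ℂ := if x = y then 1 else 0

lemma full_FF10 (a : Fin n → ℂ) (i j k l : Fin n) :
    ∑ p, ∑ q, a p * a q * F2 n i j p q * F2 n k l p q
    = 2 * (((if i = k ∧ j = l then 1 else 0) - (if i = l ∧ j = k then 1 else 0)) *
        (a i * a j)) := by
  simp only [F2, sub_mul, mul_sub, mul_ite, ite_mul, mul_one, mul_zero, one_mul, zero_mul,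
    ite_and, Finset.sum_sub_distrib, Finset.sum_ite_eq, Finset.sum_ite_eq',
    Finset.mem_univ, if_true]
  by_cases h1 : i = k <;> by_cases h2 : j = l <;> by_cases h3 : i = l <;>
    by_cases h4 : j = k <;> simp_all [eq_comm] <;> ring

lemma full_Fu10 (a : Fin n → ℂ) (i j k : Fin n) :
    ∑ p, ∑ q, a p * a q * F2 n i j p q *
      ((if p = k then 1 else 0) - (if q = k then 1 else 0))
    = 2 * (a i * a j * (II i k - II j k)) := by
  simp only [F2, II, sub_mul, mul_sub, mul_ite, ite_mul, mul_one, mul_zero, one_mul, zero_mul,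
    ite_and, Finset.sum_sub_distrib, Finset.sum_ite_eq, Finset.sum_ite_eq',
    Finset.mem_univ, if_true]
  by_cases h1 : i = k <;> by_cases h2 : j = k <;> simp_all [eq_comm] <;> ring

lemma full_uu10 (a : Fin n → ℂ) (i k : Fin n) :
    ∑ p, ∑ q, a p * a q * ((if p = i then 1 else 0) - (if q = i then 1 else 0)) *
      ((if p = k then 1 else 0) - (if q = k then 1 else 0))
    = 2 * (II i k * (a i * ∑ m, a m) - a i * a k) := by
  simp only [II, sub_mul, mul_sub, mul_ite, ite_mul, mul_one, mul_zero, one_mul, zero_mul,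
    Finset.sum_sub_distrib, Finset.sum_ite_eq, Finset.sum_ite_eq',
    Finset.mem_univ, if_true, ← Finset.mul_sum, ← Finset.sum_mul]
  by_cases h1 : i = k
  · simp_all [eq_comm, Finset.mul_sum]
    have e1 : ∑ x, a x * a k = ∑ x, a k * a x :=
      Finset.sum_congr rfl fun x _ => mul_comm _ _
    have e2 : ∑ x, 2 * (a k * a x) = 2 * ∑ x, a k * a x := by rw [Finset.mul_sum]
    linear_combination e1 - e2
  · simp_all [eq_comm]
    ring

lemma S2_FF10 (a : Fin n → ℂ) (i j k l : Fin n) :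
    S2 a (F2 n i j) (F2 n k l)
    = ((if i = k ∧ j = l then 1 else 0) - (if i = l ∧ j = k then 1 else 0)) * (a i * a j) := by
  rw [S2_full10 a _ _ (F2_anti10 i j) (F2_anti10 k l), full_FF10]
  ring

lemma S2_Fu10 (a : Fin n → ℂ) (i j k : Fin n) :
    S2 a (F2 n i j) (∑ m, F2 n k m) = a i * a j * (II i k - II j k) := by
  rw [S2_full10 a _ _ (F2_anti10 i j) (u_anti10 k)]
  rw [show (∑ p, ∑ q, a p * a q * F2 n i j p q * (∑ m, F2 n k m) p q)
      = ∑ p, ∑ q, a p * a q * F2 n i j p q *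
          ((if p = k then 1 else 0) - (if q = k then 1 else 0)) from
    Finset.sum_congr rfl fun p _ => Finset.sum_congr rfl fun q _ => by rw [u_apply10]]
  rw [full_Fu10]
  ring

lemma S2_uF10 (a : Fin n → ℂ) (k i j : Fin n) :
    S2 a (∑ m, F2 n k m) (F2 n i j) = a i * a j * (II i k - II j k) := by
  rw [S2_comm10, S2_Fu10]

lemma S2_uu10 (a : Fin n → ℂ) (i k : Fin n) :
    S2 a (∑ m, F2 n i m) (∑ m, F2 n k m)
    = II i k * (a i * ∑ m, a m) - a i * a k := by
  rw [S2_full10 a _ _ (u_anti10 i) (u_anti10 k)]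
  rw [show (∑ p, ∑ q, a p * a q * (∑ m, F2 n i m) p q * (∑ m, F2 n k m) p q)
      = ∑ p, ∑ q, a p * a q * ((if p = i then 1 else 0) - (if q = i then 1 else 0)) *
          ((if p = k then 1 else 0) - (if q = k then 1 else 0)) from
    Finset.sum_congr rfl fun p _ => Finset.sum_congr rfl fun q _ => by
      rw [u_apply10, u_apply10]]
  rw [full_uu10]
  ring

lemma expand_left10 (a : Fin n → ℂ) (i j : Fin n) (h : i ≠ j) (y : Fin n → Fin n → ℂ) :
    S2 a (vv2 a i j) y = S2 a (F2 n i j) y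
      - (a j / ∑ m, a m) * S2 a (∑ m, F2 n i m) y
      + (a i / ∑ m, a m) * S2 a (∑ m, F2 n j m) y := by
  rw [vv2, if_neg h, w_eq_neg_u10, smul_neg, sub_neg_eq_add,
    S2_add_left10, S2_sub_left10, S2_smul_left10, S2_smul_left10]

lemma expand_right10 (a : Fin n → ℂ) (y : Fin n → Fin n → ℂ) (k l : Fin n) (h : k ≠ l) :
    S2 a y (vv2 a k l) = S2 a y (F2 n k l)
      - (a l / ∑ m, a m) * S2 a y (∑ m, F2 n k m)
      + (a k / ∑ m, a m) * S2 a y (∑ m, F2 n l m) := by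
  rw [S2_comm10 a y (vv2 a k l), expand_left10 a k l h y, S2_comm10 a (F2 n k l) y,
    S2_comm10 a (∑ m, F2 n k m) y, S2_comm10 a (∑ m, F2 n l m) y]

lemma master10 (a : Fin n → ℂ) (i j k l : Fin n) (hij : i ≠ j) (hkl : k ≠ l) :
    S2 a (vv2 a i j) (vv2 a k l) =
      ((if i = k ∧ j = l then 1 else 0) - (if i = l ∧ j = k then 1 else 0)) * (a i * a j)
      - (a l / ∑ m, a m) * (a i * a j * (II i k - II j k))
      + (a k / ∑ m, a m) * (a i * a j * (II i l - II j l))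
      - (a j / ∑ m, a m) * ((a k * a l * (II k i - II l i))
          - (a l / ∑ m, a m) * (II i k * (a i * ∑ m, a m) - a i * a k)
          + (a k / ∑ m, a m) * (II i l * (a i * ∑ m, a m) - a i * a l))
      + (a i / ∑ m, a m) * ((a k * a l * (II k j - II l j))
          - (a l / ∑ m, a m) * (II j k * (a j * ∑ m, a m) - a j * a k)
          + (a k / ∑ m, a m) * (II j l * (a j * ∑ m, a m) - a j * a l)) := by
  rw [expand_left10 a i j hij (vv2 a k l),
    expand_right10 a (F2 n i j) k l hkl,
    expand_right10 a (∑ m, F2 n i m) k l hkl,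
    expand_right10 a (∑ m, F2 n j m) k l hkl,
    S2_FF10 a i j k l, S2_Fu10 a i j k, S2_Fu10 a i j l,
    S2_uF10 a i k l, S2_uu10 a i k, S2_uu10 a i l,
    S2_uF10 a j k l, S2_uu10 a j k, S2_uu10 a j l]

end aux10

/-- Values of the contravariant form on the vectors `v_{i,j}`. -/
theorem stmt_10 (n : ℕ) (hn : 3 ≤ n) (b : Fin n → Fin 2 → ℂ)
    (hd : ∀ i j : Fin n, i ≠ j → dd2 b i j ≠ 0)
    (a : Fin n → ℂ) (ha : ∀ j, a j ≠ 0) (hA : (∑ j, a j) ≠ 0) :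
    (∀ i j k l : Fin n, i ≠ j → i ≠ k → i ≠ l → j ≠ k → j ≠ l → k ≠ l →
      S2 a (vv2 a i j) (vv2 a k l) = 0) ∧
    (∀ i j k : Fin n, i ≠ j → i ≠ k → j ≠ k →
      S2 a (vv2 a i j) (vv2 a i k) = -(a i * a j * a k) / (∑ m, a m)) ∧
    (∀ i j : Fin n, i ≠ j →
      S2 a (vv2 a i j) (vv2 a i j) = a i * a j - a i * a j * (a i + a j) / (∑ m, a m) ∧
      S2 a (vv2 a i j) (vv2 a i j) =
        -∑ k ∈ Finset.univ.erase j, S2 a (vv2 a i j) (vv2 a i k)) := by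
  have part2 : ∀ i j k : Fin n, i ≠ j → i ≠ k → j ≠ k →
      S2 a (vv2 a i j) (vv2 a i k) = -(a i * a j * a k) / (∑ m, a m) := by
    intro i j k hij hik hjk
    rw [master10 a i j i k hij hik]
    rw [if_neg (show ¬(i = i ∧ j = k) by simp [hjk]),
      if_neg (show ¬(i = k ∧ j = i) by simp [hik])]
    simp only [II, if_pos rfl, ↓reduceIte, if_neg hij, if_neg hik, if_neg hjk,
      if_neg (Ne.symm hij), if_neg (Ne.symm hik), if_neg (Ne.symm hjk)]
    field_simp
    ring
  refine ⟨?_, part2, ?_⟩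
  · intro i j k l hij hik hil hjk hjl hkl
    rw [master10 a i j k l hij hkl]
    rw [if_neg (show ¬(i = k ∧ j = l) by simp [hik]),
      if_neg (show ¬(i = l ∧ j = k) by simp [hil])]
    simp only [II, if_neg hik, if_neg hil, if_neg hjk, if_neg hjl,
      if_neg (Ne.symm hik), if_neg (Ne.symm hil), if_neg (Ne.symm hjk), if_neg (Ne.symm hjl)]
    ring
  · intro i j hij
    have h3a : S2 a (vv2 a i j) (vv2 a i j)
        = a i * a j - a i * a j * (a i + a j) / (∑ m, a m) := by
      rw [master10 a i j i j hij hij]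
      rw [if_pos (show i = i ∧ j = j from ⟨rfl, rfl⟩),
        if_neg (show ¬(i = j ∧ j = i) by simp [hij])]
      simp only [II, if_pos rfl, ↓reduceIte, if_neg hij, if_neg (Ne.symm hij)]
      field_simp
      ring
    refine ⟨h3a, ?_⟩
    have himem : i ∈ (Finset.univ.erase j) :=
      Finset.mem_erase.mpr ⟨hij, Finset.mem_univ i⟩
    have hsum : ∑ k ∈ Finset.univ.erase j, S2 a (vv2 a i j) (vv2 a i k)
        = (∑ k ∈ (Finset.univ.erase j).erase i, S2 a (vv2 a i j) (vv2 a i k))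
          + S2 a (vv2 a i j) (vv2 a i i) :=
      (Finset.sum_erase_add _ _ himem).symm
    have hz : S2 a (vv2 a i j) (vv2 a i i) = 0 := by
      rw [show vv2 a i i = 0 from by rw [vv2, if_pos rfl]]
      exact S2_zero_right10 a _
    have hval : ∑ k ∈ (Finset.univ.erase j).erase i, S2 a (vv2 a i j) (vv2 a i k)
        = -(a i * a j / (∑ m, a m)) * ∑ k ∈ (Finset.univ.erase j).erase i, a k := by
      rw [Finset.mul_sum]
      refine Finset.sum_congr rfl fun k hk => ?_
      have hki : k ≠ i := (Finset.mem_erase.mp hk).1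
      have hkj : k ≠ j := (Finset.mem_erase.mp (Finset.mem_erase.mp hk).2).1
      rw [part2 i j k hij (Ne.symm hki) (Ne.symm hkj)]
      field_simp
    have hB : ∑ k ∈ (Finset.univ.erase j).erase i, a k = (∑ m, a m) - a i - a j := by
      have h1 := Finset.sum_erase_add (Finset.univ.erase j) a himem
      have h2 := Finset.sum_erase_add Finset.univ a (Finset.mem_univ j)
      linear_combination h1 + h2
    rw [hsum, hz, hval, hB, h3a]
    field_simp
    ring
end

section
/- For every z ∈ ℂ^n with f_{i,j,k}(z) ≠ 0 for all triples of distinct indices, and every i ∈ {1,…,n}: the operator K_i(z) preserves the subspace Sing V ⊆ V, and K_i(z) is symmetric with respect to the contravariant form, i.e. S^{(a)}(K_i(z) v, w) = S^{(a)}(v, K_i(z) w) for all v, w ∈ V. -/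
open Finset

lemma F2_skew {n : ℕ} (p q l m : Fin n) : F2 n p q m l = - F2 n p q l m := by
  unfold F2
  by_cases h1 : m = p <;> by_cases h2 : l = q <;> by_cases h3 : m = q <;>
    by_cases h4 : l = p <;> simp [h1, h2, h3, h4, and_comm]

lemma sumF {n : ℕ} (a : Fin n → ℂ) (p q m : Fin n) :
    ∑ l, a l * F2 n p q l m = (if m = q then a p else 0) - (if m = p then a q else 0) := by
  unfold F2
  simp only [mul_sub, Finset.sum_sub_distrib, mul_ite, mul_one, mul_zero, ite_and]
  rw [Finset.sum_ite_eq' univ p (fun l => if m = q then a l else 0),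
      Finset.sum_ite_eq' univ q (fun l => if m = p then a l else 0)]
  simp

lemma S2_add_left {n : ℕ} (a : Fin n → ℂ) (x x' y : Fin n → Fin n → ℂ) :
    S2 a (x + x') y = S2 a x y + S2 a x' y := by
  unfold S2
  rw [← Finset.sum_add_distrib]
  refine Finset.sum_congr rfl fun p _ => ?_
  rw [← Finset.sum_add_distrib]
  refine Finset.sum_congr rfl fun q _ => ?_
  simp only [Pi.add_apply]; ring

lemma S2_smul_left {n : ℕ} (a : Fin n → ℂ) (c : ℂ) (x y : Fin n → Fin n → ℂ) :
    S2 a (c • x) y = c * S2 a x y := by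
  unfold S2
  rw [Finset.mul_sum]
  refine Finset.sum_congr rfl fun p _ => ?_
  rw [Finset.mul_sum]
  refine Finset.sum_congr rfl fun q _ => ?_
  simp only [Pi.smul_apply, smul_eq_mul]; ring

lemma S2_comm {n : ℕ} (a : Fin n → ℂ) (x y : Fin n → Fin n → ℂ) :
    S2 a x y = S2 a y x := by
  unfold S2
  refine Finset.sum_congr rfl fun p _ => Finset.sum_congr rfl fun q _ => by ring

lemma S2_sum_left {n : ℕ} {ι : Type*} (a : Fin n → ℂ) (s : Finset ι)
    (g : ι → Fin n → Fin n → ℂ) (y : Fin n → Fin n → ℂ) :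
    S2 a (∑ t ∈ s, g t) y = ∑ t ∈ s, S2 a (g t) y := by
  classical
  induction s using Finset.induction with
  | empty => simp [S2]
  | insert _ _ h ih => rw [Finset.sum_insert h, S2_add_left, ih, Finset.sum_insert h]

lemma S2_F2 {n : ℕ} (a : Fin n → ℂ) (y : Fin n → Fin n → ℂ)
    (hy : ∀ p q, y q p = -y p q) (p q : Fin n) :
    S2 a (F2 n p q) y = a p * a q * y p q := by
  have hdiag : ∀ r, y r r = 0 := fun r => by
    have h := hy r r; linear_combination h / 2
  unfold S2 F2
  have step : ∀ l : Fin n, ∑ m ∈ Finset.univ.filter (fun m => l < m),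
      a l * a m * ((if l = p ∧ m = q then (1:ℂ) else 0) - (if l = q ∧ m = p then 1 else 0)) * y l m
      = (if l = p ∧ l < q then a p * a q * y p q else 0)
        - (if l = q ∧ l < p then a q * a p * y q p else 0) := by
    intro l
    have hcong : ∀ m ∈ Finset.univ.filter (fun m => l < m),
        a l * a m * ((if l = p ∧ m = q then (1:ℂ) else 0) - (if l = q ∧ m = p then 1 else 0)) * y l m
        = (if l = p then (if m = q then a l * a m * y l m else 0) else 0)
          - (if l = q then (if m = p then a l * a m * y l m else 0) else 0) := by
      intro m _
      simp only [ite_and]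
      split_ifs <;> ring
    rw [Finset.sum_congr rfl hcong, Finset.sum_sub_distrib]
    congr 1
    · by_cases hlp : l = p
      · subst hlp
        simp only [if_pos rfl, true_and, eq_self_iff_true, if_true]
        rw [Finset.sum_ite_eq' (Finset.univ.filter fun m => l < m) q
            (fun m => a l * a m * y l m)]
        simp only [Finset.mem_filter, Finset.mem_univ, true_and]
      · simp [hlp]
    · by_cases hlq : l = q
      · subst hlq
        simp only [if_pos rfl, true_and, eq_self_iff_true, if_true]
        rw [Finset.sum_ite_eq' (Finset.univ.filter fun m => l < m) p
            (fun m => a l * a m * y l m)]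
        simp only [Finset.mem_filter, Finset.mem_univ, true_and]
      · simp [hlq]
  rw [Finset.sum_congr rfl (fun l _ => step l), Finset.sum_sub_distrib]
  simp only [ite_and]
  rw [Finset.sum_ite_eq' Finset.univ p, Finset.sum_ite_eq' Finset.univ q]
  simp only [Finset.mem_univ, if_pos]
  rcases lt_trichotomy p q with h | h | h
  · simp [h, not_lt.mpr h.le, asymm h]
  · subst h; simp [hdiag]
  · simp only [not_lt.mpr h.le, if_neg, if_pos h, if_false]
    rw [hy q p]
    ring


lemma sing_of_colsum {n : ℕ} (a : Fin n → ℂ) (x : Fin n → Fin n → ℂ)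
    (hskew : ∀ p q, x q p = -x p q) (hcol : ∀ m, ∑ l, a l * x l m = 0) :
    x ∈ singV2 n a := by
  refine ⟨hskew, fun m => ?_⟩
  have h0 : x m m = 0 := by have h := hskew m m; linear_combination h / 2
  have hsplit : ∑ l, a l * x l m =
      (∑ l ∈ Finset.univ.filter (fun l => l < m), a l * x l m) +
        (∑ l ∈ Finset.univ.filter (fun l => m < l), a l * x l m) := by
    rw [← Finset.sum_filter_add_sum_filter_not Finset.univ (fun l => l < m)]
    congr 1
    have hset : Finset.univ.filter (fun l : Fin n => ¬ l < m)
        = insert m (Finset.univ.filter (fun l => m < l)) := by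
      ext l
      simp [not_lt, le_iff_lt_or_eq, eq_comm, or_comm]
    rw [hset, Finset.sum_insert (by simp), h0, mul_zero, zero_add]
  have hneg : ∑ l ∈ Finset.univ.filter (fun l => m < l), a l * x m l
      = - ∑ l ∈ Finset.univ.filter (fun l => m < l), a l * x l m := by
    rw [← Finset.sum_neg_distrib]
    exact Finset.sum_congr rfl fun l _ => by rw [hskew l m]; ring
  rw [hneg]
  linear_combination hcol m - hsplit

lemma w_mem {n : ℕ} (a : Fin n → ℂ) (i j k : Fin n)
    (hij : i ≠ j) (hjk : j ≠ k) (hik : i ≠ k) :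
    a k • F2 n i j + a i • F2 n j k + a j • F2 n k i ∈ singV2 n a := by
  apply sing_of_colsum
  · intro p q
    simp only [Pi.add_apply, Pi.smul_apply, smul_eq_mul]
    rw [F2_skew i j p q, F2_skew j k p q, F2_skew k i p q]
    ring
  · intro m
    have hterm : ∀ l ∈ (Finset.univ : Finset (Fin n)),
        a l * (a k • F2 n i j + a i • F2 n j k + a j • F2 n k i) l m
        = a k * (a l * F2 n i j l m) + a i * (a l * F2 n j k l m)
          + a j * (a l * F2 n k i l m) := by
      intro l _
      simp only [Pi.add_apply, Pi.smul_apply, smul_eq_mul]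
      ring
    rw [Finset.sum_congr rfl hterm, Finset.sum_add_distrib, Finset.sum_add_distrib,
        ← Finset.mul_sum, ← Finset.mul_sum, ← Finset.mul_sum, sumF, sumF, sumF]
    split_ifs <;> first | ring | (exfalso; grind)

lemma L2_S2 {n : ℕ} (a : Fin n → ℂ) (i j k : Fin n) (x y : Fin n → Fin n → ℂ)
    (hy : ∀ p q, y q p = -y p q) :
    S2 a (L2 a i j k x) y
      = a i * a j * a k * (x i j + x j k + x k i) * (y i j + y j k + y k i) := by
  rw [show (L2 a i j k) x = (x i j + x j k + x k i) •
      (a k • F2 n i j + a i • F2 n j k + a j • F2 n k i) from rfl,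
    S2_smul_left, S2_add_left, S2_add_left, S2_smul_left, S2_smul_left, S2_smul_left,
    S2_F2 a y hy, S2_F2 a y hy, S2_F2 a y hy]
  ring

/-- For every `z` with all `f_{i,j,k}(z) ≠ 0` and every `i`, the operator
`K_i(z)` preserves `Sing V ⊆ V` and is symmetric with respect to the contravariant form:
`S^{(a)}(K_i(z) v, w) = S^{(a)}(v, K_i(z) w)` for all `v, w ∈ V`. -/
theorem stmt_12 (n : ℕ) (hn : 3 ≤ n) (b : Fin n → Fin 2 → ℂ)
    (hd : ∀ i j : Fin n, i ≠ j → dd2 b i j ≠ 0)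
    (a : Fin n → ℂ) (ha : ∀ j, a j ≠ 0) (hA : (∑ j, a j) ≠ 0)
    (z : Fin n → ℂ)
    (hz : ∀ i j k : Fin n, i ≠ j → i ≠ k → j ≠ k → ff2 b z i j k ≠ 0)
    (i : Fin n) :
    (∀ x ∈ singV2 n a, K2 a b z i x ∈ singV2 n a) ∧
    (∀ x ∈ skewV2 n, ∀ y ∈ skewV2 n,
      S2 a (K2 a b z i x) y = S2 a x (K2 a b z i y)) := by
  constructor
  · intro x _
    simp only [K2, LinearMap.sum_apply, LinearMap.smul_apply]
    refine Submodule.sum_mem _ fun j hj => Submodule.sum_mem _ fun k hk =>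
      Submodule.smul_mem _ _ ?_
    simp only [Finset.mem_erase, Finset.mem_filter] at hj hk
    rw [show (L2 a i j k) x = (x i j + x j k + x k i) •
        (a k • F2 n i j + a i • F2 n j k + a j • F2 n k i) from rfl]
    exact Submodule.smul_mem _ _
      (w_mem a i j k (Ne.symm hj.1) (ne_of_lt hk.2.1) (Ne.symm hk.2.2))
  · intro x hx y hy
    have hxs : ∀ p q, x q p = -x p q := hx
    have hys : ∀ p q, y q p = -y p q := hy
    simp only [K2, LinearMap.sum_apply, LinearMap.smul_apply]
    rw [S2_sum_left, S2_comm a x, S2_sum_left]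
    refine Finset.sum_congr rfl fun j _ => ?_
    rw [S2_sum_left, S2_sum_left]
    refine Finset.sum_congr rfl fun k _ => ?_
    rw [S2_smul_left, S2_smul_left, L2_S2 a i j k x y hys, L2_S2 a i j k y x hxs]
    ring
end

section
/- Assume in addition that b_i^1 ≠ 0 for every i. Then for every m ∈ {1,…,n} and every z ∈ ℂ^n: −Σ_{1 ≤ i < j ≤ n} ((z_i b_j^1 − z_j b_i^1)²/(d_{i,j} b_i^1 b_j^1)) v_{i,j} = Σ' (f_{i,j,m}(z)²/(d_{i,j} d_{j,m} d_{m,i})) v_{i,j}, where Σ' is over all pairs i < j with m ∉ {i,j}. In particular the right-hand side is independent of the choice of m. -/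
open Finset

set_option maxHeartbeats 1000000 in
/-- Key scalar identity: `f_{i,j,m}²/(d_{ij}d_{jm}d_{mi}) = g_{im} − g_{jm} − g_{ij}` where
`g_{ij} = (z_i b_j¹ − z_j b_i¹)²/(d_{ij} b_i¹ b_j¹)`. -/
lemma master13 {n : ℕ} (b : Fin n → Fin 2 → ℂ) (z : Fin n → ℂ) (i j m : Fin n)
    (hij : dd2 b i j ≠ 0) (him : dd2 b i m ≠ 0) (hjm : dd2 b j m ≠ 0)
    (hi : b i 0 ≠ 0) (hj : b j 0 ≠ 0) (hm : b m 0 ≠ 0) :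
    ff2 b z i j m ^ 2 / (dd2 b i j * dd2 b j m * dd2 b m i) =
      (z i * b m 0 - z m * b i 0) ^ 2 / (dd2 b i m * b i 0 * b m 0)
      - (z j * b m 0 - z m * b j 0) ^ 2 / (dd2 b j m * b j 0 * b m 0)
      - (z i * b j 0 - z j * b i 0) ^ 2 / (dd2 b i j * b i 0 * b j 0) := by
  have hmi : dd2 b m i ≠ 0 := fun h => him (by simp only [dd2] at h ⊢; linear_combination -h)
  have h1 : dd2 b i m * b i 0 * b m 0 ≠ 0 := mul_ne_zero (mul_ne_zero him hi) hm
  have h2 : dd2 b j m * b j 0 * b m 0 ≠ 0 := mul_ne_zero (mul_ne_zero hjm hj) hm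
  have h3 : dd2 b i j * b i 0 * b j 0 ≠ 0 := mul_ne_zero (mul_ne_zero hij hi) hj
  have h0 : dd2 b i j * dd2 b j m * dd2 b m i ≠ 0 := mul_ne_zero (mul_ne_zero hij hjm) hmi
  rw [div_sub_div _ _ h1 h2, div_sub_div _ _ (mul_ne_zero h1 h2) h3,
    div_eq_div_iff h0 (mul_ne_zero (mul_ne_zero h1 h2) h3)]
  simp only [dd2, ff2]
  ring

lemma F2_swap13 {n : ℕ} (i j : Fin n) : F2 n j i = -F2 n i j := by
  funext k l; simp only [F2, Pi.neg_apply]; ring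

lemma F2_diag13 {n : ℕ} (i : Fin n) : F2 n i i = 0 := by
  funext k l; simp [F2]

lemma F2_col_sum13 {n : ℕ} (j : Fin n) : (∑ l, F2 n l j) = -∑ k, F2 n j k := by
  rw [← Finset.sum_neg_distrib]
  exact Finset.sum_congr rfl fun l _ => F2_swap13 j l

lemma vv2_eq13 {n : ℕ} (a : Fin n → ℂ) (i j : Fin n) :
    vv2 a i j = F2 n i j - (a j / ∑ m, a m) • (∑ k, F2 n i k)
      + (a i / ∑ m, a m) • (∑ k, F2 n j k) := by
  by_cases h : i = j
  · subst h
    rw [vv2, if_pos rfl, F2_diag13]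
    abel
  · rw [vv2, if_neg h, F2_col_sum13, smul_neg, sub_neg_eq_add]

lemma vv2_swap13 {n : ℕ} (a : Fin n → ℂ) (i j : Fin n) : vv2 a j i = -vv2 a i j := by
  rw [vv2_eq13, vv2_eq13, F2_swap13]
  abel

lemma G_total13 {n : ℕ} : ∑ i : Fin n, ∑ k, F2 n i k = 0 := by
  have h : ∑ i : Fin n, ∑ k, F2 n i k = -∑ i : Fin n, ∑ k, F2 n i k := by
    nth_rewrite 1 [Finset.sum_comm]
    rw [← Finset.sum_neg_distrib]
    refine Finset.sum_congr rfl fun k _ => ?_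
    rw [← Finset.sum_neg_distrib]
    exact Finset.sum_congr rfl fun i _ => F2_swap13 k i
  have h2 : (2 : ℂ) • (∑ i : Fin n, ∑ k, F2 n i k) = 0 := by
    rw [two_smul]; nth_rewrite 1 [h]; abel
  exact (smul_eq_zero.mp h2).resolve_left (by norm_num)

/-- Sum of a coboundary against the `v_{i,j}` (full double sum) vanishes. -/
lemma cob13 {n : ℕ} (a : Fin n → ℂ) (hA : (∑ j, a j) ≠ 0) (u : Fin n → ℂ) :
    ∑ i, ∑ j, (u i - u j) • vv2 a i j = (0 : Fin n → Fin n → ℂ) := by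
  have hA' : (∑ m, a m) ≠ 0 := hA
  set W : ℂ := ∑ j, u j * a j with hW
  set T : Fin n → Fin n → ℂ := ∑ i, u i • (∑ k, F2 n i k) with hT
  have key : ∀ i j : Fin n, (u i - u j) • vv2 a i j =
      (u i - u j) • F2 n i j - ((u i - u j) * (a j / ∑ m, a m)) • (∑ k, F2 n i k)
      + ((u i - u j) * (a i / ∑ m, a m)) • (∑ k, F2 n j k) := by
    intro i j
    rw [vv2_eq13, smul_add, smul_sub, smul_smul, smul_smul]
  simp only [key, Finset.sum_add_distrib, Finset.sum_sub_distrib]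
  have hS1a : ∑ i : Fin n, ∑ j, (u i - u j) • F2 n i j = T + T := by
    simp only [sub_smul, Finset.sum_sub_distrib]
    have e1 : ∑ i : Fin n, ∑ j, u i • F2 n i j = T :=
      Finset.sum_congr rfl fun i _ => (Finset.smul_sum).symm
    have e2 : ∑ i : Fin n, ∑ j, u j • F2 n i j = -T := by
      rw [Finset.sum_comm]
      rw [show ∑ j : Fin n, ∑ i, u j • F2 n i j = ∑ j : Fin n, u j • ∑ i, F2 n i j from
        Finset.sum_congr rfl fun j _ => (Finset.smul_sum).symm]
      rw [← Finset.sum_neg_distrib]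
      refine Finset.sum_congr rfl fun j _ => ?_
      rw [F2_col_sum13, smul_neg]
    rw [e1, e2]; abel
  have hS2 : ∑ i : Fin n, ∑ j, ((u i - u j) * (a j / ∑ m, a m)) • (∑ k, F2 n i k) = T := by
    have e : ∀ i : Fin n, ∑ j, ((u i - u j) * (a j / ∑ m, a m)) • (∑ k, F2 n i k)
        = (u i - W / ∑ m, a m) • (∑ k, F2 n i k) := by
      intro i
      rw [← Finset.sum_smul]
      congr 1
      calc ∑ j, (u i - u j) * (a j / ∑ m, a m) = (∑ j, (u i - u j) * a j) / ∑ m, a m := by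
            rw [Finset.sum_div]
            exact Finset.sum_congr rfl fun j _ => (mul_div_assoc _ _ _).symm
        _ = (u i * ∑ m, a m - W) / ∑ m, a m := by
            rw [hW]
            congr 1
            simp only [sub_mul, Finset.sum_sub_distrib, ← Finset.mul_sum]
        _ = u i - W / ∑ m, a m := by
            rw [sub_div, mul_div_assoc, div_self hA', mul_one]
    rw [Finset.sum_congr rfl fun i _ => e i]
    simp only [sub_smul, Finset.sum_sub_distrib, ← Finset.smul_sum, G_total13, smul_zero,
      sub_zero, hT]
  have hS3 : ∑ i : Fin n, ∑ j, ((u i - u j) * (a i / ∑ m, a m)) • (∑ k, F2 n j k) = -T := by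
    rw [Finset.sum_comm]
    have e : ∀ j : Fin n, ∑ i, ((u i - u j) * (a i / ∑ m, a m)) • (∑ k, F2 n j k)
        = (W / ∑ m, a m - u j) • (∑ k, F2 n j k) := by
      intro j
      rw [← Finset.sum_smul]
      congr 1
      calc ∑ i, (u i - u j) * (a i / ∑ m, a m) = (∑ i, (u i - u j) * a i) / ∑ m, a m := by
            rw [Finset.sum_div]
            exact Finset.sum_congr rfl fun i _ => (mul_div_assoc _ _ _).symm
        _ = (W - u j * ∑ m, a m) / ∑ m, a m := by
            rw [hW]
            congr 1
            simp only [sub_mul, Finset.sum_sub_distrib, ← Finset.mul_sum]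
        _ = W / ∑ m, a m - u j := by
            rw [sub_div, mul_div_assoc, div_self hA', mul_one]
    rw [Finset.sum_congr rfl fun j _ => e j]
    simp only [sub_smul, Finset.sum_sub_distrib, ← Finset.smul_sum, G_total13, smul_zero,
      zero_sub, hT]
  rw [hS1a, hS2, hS3]
  abel

/-- Sum of a coboundary against the `v_{i,j}` over `i < j` vanishes. -/
lemma cob_half13 {n : ℕ} (a : Fin n → ℂ) (hA : (∑ j, a j) ≠ 0) (u : Fin n → ℂ) :
    ∑ i, ∑ j, (if i < j then (u i - u j) • vv2 a i j else 0) = (0 : Fin n → Fin n → ℂ) := by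
  have hsymm : ∀ i j : Fin n, (u j - u i) • vv2 a j i = (u i - u j) • vv2 a i j := by
    intro i j
    rw [vv2_swap13, smul_neg, ← neg_smul, neg_sub]
  have swap : ∑ i : Fin n, ∑ j, (if j < i then (u i - u j) • vv2 a i j else 0)
      = ∑ i : Fin n, ∑ j, (if i < j then (u i - u j) • vv2 a i j else 0) := by
    rw [Finset.sum_comm]
    refine Finset.sum_congr rfl fun i _ => Finset.sum_congr rfl fun j _ => ?_
    by_cases h : i < j
    · rw [if_pos h, if_pos h, hsymm]
    · rw [if_neg h, if_neg h]
  have tri : ∀ i j : Fin n, (if i < j then (u i - u j) • vv2 a i j else 0)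
      + (if j < i then (u i - u j) • vv2 a i j else 0) = (u i - u j) • vv2 a i j := by
    intro i j
    rcases lt_trichotomy i j with h | h | h
    · rw [if_pos h, if_neg (asymm h), add_zero]
    · subst h
      rw [if_neg (lt_irrefl i), add_zero, sub_self, zero_smul]
    · rw [if_neg (asymm h), if_pos h, zero_add]
  have h2 : (∑ i : Fin n, ∑ j, (if i < j then (u i - u j) • vv2 a i j else 0))
      + (∑ i : Fin n, ∑ j, (if i < j then (u i - u j) • vv2 a i j else 0)) = 0 := by
    nth_rewrite 2 [← swap]
    rw [← Finset.sum_add_distrib]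
    rw [Finset.sum_congr rfl fun i _ => (Finset.sum_add_distrib).symm]
    rw [Finset.sum_congr rfl fun i _ => Finset.sum_congr rfl fun j _ => tri i j]
    exact cob13 a hA u
  have h3 : (2 : ℂ) • (∑ i : Fin n, ∑ j, (if i < j then (u i - u j) • vv2 a i j else 0)) = 0 := by
    rw [two_smul]; exact h2
  exact (smul_eq_zero.mp h3).resolve_left (by norm_num)

lemma g_antisym13 {n : ℕ} (b : Fin n → Fin 2 → ℂ) (z : Fin n → ℂ) (i j : Fin n) :
    (z i * b j 0 - z j * b i 0) ^ 2 / (dd2 b i j * b i 0 * b j 0)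
      = -((z j * b i 0 - z i * b j 0) ^ 2 / (dd2 b j i * b j 0 * b i 0)) := by
  have h1 : dd2 b j i * b j 0 * b i 0 = -(dd2 b i j * b i 0 * b j 0) := by
    simp only [dd2]; ring
  have h2 : (z j * b i 0 - z i * b j 0) ^ 2 = (z i * b j 0 - z j * b i 0) ^ 2 := by ring
  rw [h2, h1, div_neg, neg_neg]

/-- If moreover `b_i^1 ≠ 0` for all `i`, then for every `m` and `z`:
`−∑_{i<j} ((z_i b_j^1 − z_j b_i^1)²/(d_{i,j} b_i^1 b_j^1)) v_{i,j}
 = ∑'_{i<j, m∉{i,j}} (f_{i,j,m}(z)²/(d_{i,j} d_{j,m} d_{m,i})) v_{i,j}`;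
in particular the right-hand side does not depend on `m`. -/
theorem stmt_13 (n : ℕ) (hn : 3 ≤ n) (b : Fin n → Fin 2 → ℂ)
    (hd : ∀ i j : Fin n, i ≠ j → dd2 b i j ≠ 0)
    (a : Fin n → ℂ) (ha : ∀ j, a j ≠ 0) (hA : (∑ j, a j) ≠ 0)
    (hb1 : ∀ i, b i 0 ≠ 0) (m : Fin n) (z : Fin n → ℂ) :
    -(∑ i, ∑ j ∈ Finset.univ.filter (fun j => i < j),
        ((z i * b j 0 - z j * b i 0) ^ 2 / (dd2 b i j * b i 0 * b j 0)) • vv2 a i j) =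
      ∑ i, ∑ j ∈ Finset.univ.filter (fun j => i < j ∧ i ≠ m ∧ j ≠ m),
        (ff2 b z i j m ^ 2 / (dd2 b i j * dd2 b j m * dd2 b m i)) • vv2 a i j := by
  classical
  set u : Fin n → ℂ := fun i =>
    (z i * b m 0 - z m * b i 0) ^ 2 / (dd2 b i m * b i 0 * b m 0) with hudef
  have hui : ∀ i, u i = (z i * b m 0 - z m * b i 0) ^ 2 / (dd2 b i m * b i 0 * b m 0) :=
    fun i => rfl
  have hum : u m = 0 := by
    rw [hui m, sub_self, zero_pow (by norm_num), zero_div]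
  have key : ∀ i j : Fin n,
      (if i < j then
        ((z i * b j 0 - z j * b i 0) ^ 2 / (dd2 b i j * b i 0 * b j 0)) • vv2 a i j else 0)
      + (if i < j ∧ i ≠ m ∧ j ≠ m then
          (ff2 b z i j m ^ 2 / (dd2 b i j * dd2 b j m * dd2 b m i)) • vv2 a i j else 0)
      = (if i < j then (u i - u j) • vv2 a i j else 0) := by
    intro i j
    by_cases hij : i < j
    · have hne : i ≠ j := ne_of_lt hij
      by_cases h1 : i ≠ m ∧ j ≠ m
      · rw [if_pos hij, if_pos ⟨hij, h1⟩, if_pos hij, ← add_smul]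
        congr 1
        have hm := master13 b z i j m (hd i j hne) (hd i m h1.1) (hd j m h1.2)
          (hb1 i) (hb1 j) (hb1 m)
        rw [hui i, hui j]
        linear_combination hm
      · have hno : ¬(i < j ∧ i ≠ m ∧ j ≠ m) := fun hc => h1 hc.2
        rw [if_pos hij, if_neg hno, add_zero, if_pos hij]
        congr 1
        rcases not_and_or.mp h1 with h2 | h2
        · have him : i = m := not_not.mp h2
          rw [him, hum, zero_sub, hui j]
          exact g_antisym13 b z m j
        · have hjm : j = m := not_not.mp h2
          rw [hjm, hum, sub_zero, hui i]
    · have hno : ¬(i < j ∧ i ≠ m ∧ j ≠ m) := fun hc => hij hc.1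
      rw [if_neg hij, if_neg hno, add_zero, if_neg hij]
  have hfil : (∑ i, ∑ j ∈ Finset.univ.filter (fun j => i < j),
        ((z i * b j 0 - z j * b i 0) ^ 2 / (dd2 b i j * b i 0 * b j 0)) • vv2 a i j)
      + (∑ i, ∑ j ∈ Finset.univ.filter (fun j => i < j ∧ i ≠ m ∧ j ≠ m),
        (ff2 b z i j m ^ 2 / (dd2 b i j * dd2 b j m * dd2 b m i)) • vv2 a i j) = 0 := by
    simp only [Finset.sum_filter]
    rw [← Finset.sum_add_distrib]
    rw [Finset.sum_congr rfl fun i _ => (Finset.sum_add_distrib).symm]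
    rw [Finset.sum_congr rfl fun i _ => Finset.sum_congr rfl fun j _ => key i j]
    exact cob_half13 a hA u
  exact neg_eq_of_add_eq_zero_right hfil
end
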